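/- arXiv:1606.01942 — 6 statements merged into one kernel-verified Lean document; each statement's English description precedes it below -/
import Mathlib

section
/- Let k be a field and n ≥ 0. In the quiver |P(n)| the following hold: (i) every vertex is the start of at most one arrow and the terminus of at most one arrow; (ii) every connected component contains exactly one vertex f with f = 0 or y ∤ f; (iii) the connected component of the vertex 0 consists of the single vertex 0 together with the single loop arrow 0 ∈ V_{n−1}; (iv) for every vertex f ≠ 0 with y ∤ f, setting d = max{ r ≥ 0 : x^r divides f }, the connected component of f is isomorphic as a quiver to the linear quiver A_{d+1}; its vertices are x^{−i} f y^i for 0 ≤ i ≤ d and its arrows are x^{−i−1} f y^i for 0 ≤ i ≤ d−1, the arrow x^{−i−1} f y^i going from x^{−i} f y^i to x^{−i−1} f y^{i+1}. -/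
/-- A quiver: vertex set `V`, arrow set `A`, start map `s`, terminus map `t`. -/
structure Quiv : Type 1 where
  V : Type
  A : Type
  s : A → V
  t : A → V

/-- Two quivers are isomorphic if there is a pair of bijections commuting with
start and terminus maps. -/
def Quiv.Iso (Γ Δ : Quiv) : Prop :=
  ∃ (φ₀ : Γ.V → Δ.V) (φ₁ : Γ.A → Δ.A),
    (∀ a, Δ.s (φ₁ a) = φ₀ (Γ.s a)) ∧ (∀ a, Δ.t (φ₁ a) = φ₀ (Γ.t a)) ∧
    Function.Bijective φ₀ ∧ Function.Bijective φ₁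

/-- The equivalence relation generated by `s a ~ t a`. -/
def Quiv.connRel (Γ : Quiv) : Γ.V → Γ.V → Prop :=
  Relation.EqvGen (fun u w => ∃ a, Γ.s a = u ∧ Γ.t a = w)

/-- The connected component of a vertex `v`: the full subquiver on all vertices
related to `v`, with all arrows whose start lies in it. -/
def Quiv.component (Γ : Quiv) (v : Γ.V) : Quiv where
  V := {u : Γ.V // Γ.connRel u v}
  A := {a : Γ.A // Γ.connRel (Γ.s a) v}
  s a := ⟨Γ.s a.1, a.2⟩
  t a := ⟨Γ.t a.1, Relation.EqvGen.trans _ _ _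
    (Relation.EqvGen.symm _ _ (Relation.EqvGen.rel _ _ ⟨a.1, rfl, rfl⟩)) a.2⟩

/-- `cyclicQuiv r` is the cyclic quiver `C_{r+1}`: vertices `0,…,r` and an arrow
`i → i+1 (mod r+1)` for each vertex `i`. -/
def cyclicQuiv (r : ℕ) : Quiv where
  V := Fin (r+1)
  A := Fin (r+1)
  s := id
  t := fun i => i + 1

/-- `linearQuiv r` is the linear quiver `A_{r+1}`: vertices `0,…,r` and arrows
`i → i+1` for `0 ≤ i < r`. -/
def linearQuiv (r : ℕ) : Quiv where
  V := Fin (r+1)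
  A := Fin r
  s := Fin.castSucc
  t := Fin.succ

open MvPolynomial

noncomputable section

/-- Polynomials in two variables `x = X 0`, `y = X 1`. -/
abbrev Poly2 (k : Type) [Field k] := MvPolynomial (Fin 2) k

/-- `Vd k n` is the space `V_n` of homogeneous polynomials of degree `n`. -/
abbrev Vd (k : Type) [Field k] (n : ℕ) : Submodule k (Poly2 k) :=
  homogeneousSubmodule (Fin 2) k n

/-- `Vm k n` is the space `V_{n-1}`, with `V_{-1} = 0`. -/
abbrev Vm (k : Type) [Field k] : ℕ → Submodule k (Poly2 k)
  | 0 => ⊥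
  | n+1 => Vd k n

theorem Vm_mul_mem (k : Type) [Field k] (n : ℕ) {c : Poly2 k} (hc : c.IsHomogeneous 1)
    {g : Poly2 k} (hg : g ∈ Vm k n) : c * g ∈ Vd k n := by
  cases n with
  | zero =>
      rw [Submodule.mem_bot] at hg
      subst hg
      rw [mul_zero]
      exact Submodule.zero_mem (Vd k 0)
  | succ m =>
      rw [mem_homogeneousSubmodule] at hg ⊢
      simpa [Nat.add_comm] using hc.mul hg

/-- Multiplication by the variable `X j`, as a linear map `V_{n-1} → V_n`. -/
def mulVar (k : Type) [Field k] (n : ℕ) (j : Fin 2) : Vm k n →ₗ[k] Vd k n where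
  toFun g := ⟨X j * g.1, Vm_mul_mem k n (isHomogeneous_X k j) g.2⟩
  map_add' a b := by ext; simp [mul_add]
  map_smul' c a := by ext; simp [mul_smul_comm]

/-- Multiplication by `x`. -/
def mulX (k : Type) [Field k] (n : ℕ) : Vm k n →ₗ[k] Vd k n := mulVar k n 0
/-- Multiplication by `y`. -/
def mulY (k : Type) [Field k] (n : ℕ) : Vm k n →ₗ[k] Vd k n := mulVar k n 1

end

noncomputable section
open MvPolynomial

/-- The quiver `|P(n)|`: vertices `V_n`, arrows `V_{n-1}`, start `g ↦ x·g`,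
terminus `g ↦ y·g`. -/
abbrev PQuiv (k : Type) [Field k] (n : ℕ) : Quiv where
  V := Vd k n
  A := Vm k n
  s := mulX k n
  t := mulY k n

-- ===================== auxiliary lemmas =====================
noncomputable section
open MvPolynomial

namespace Stmt1Aux

variable {k : Type} [Field k]

lemma primeX0 : Prime (X 0 : Poly2 k) := by
  have h : Prime ((MvPolynomial.finSuccEquiv k 1) (X 0 : Poly2 k)) := by
    rw [MvPolynomial.finSuccEquiv_X_zero]; exact Polynomial.prime_X
  exact (MulEquiv.prime_iff (MvPolynomial.finSuccEquiv k 1).toRingEquiv.toMulEquiv).mp h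

lemma primeX1 : Prime (X 1 : Poly2 k) := by
  have h : Prime ((MvPolynomial.renameEquiv k (Equiv.swap (0:Fin 2) 1)) (X 1 : Poly2 k)) := by
    rw [MvPolynomial.renameEquiv_apply, MvPolynomial.rename_X, Equiv.swap_apply_right]
    exact primeX0
  exact (MulEquiv.prime_iff
    (MvPolynomial.renameEquiv k (Equiv.swap (0:Fin 2) 1)).toRingEquiv.toMulEquiv).mp h

lemma ppow_le {α} [CommMonoidWithZero α] [IsCancelMulZero α] {p : α} (hp : Prime p) {a b : ℕ} {c d : α}
    (hc : ¬ p ∣ c) (h : p ^ a * c = p ^ b * d) : b ≤ a := by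
  by_contra hlt
  push_neg at hlt
  have hcd : c = p ^ (b - a) * d := by
    apply mul_left_cancel₀ (pow_ne_zero a hp.ne_zero)
    rw [h, ← mul_assoc, ← pow_add]
    congr 2
    omega
  exact hc ⟨p ^ (b - a - 1) * d, by
    rw [hcd, ← mul_assoc, ← pow_succ']
    congr 2
    omega⟩

lemma ppow_uniq {α} [CommMonoidWithZero α] [IsCancelMulZero α] {p : α} (hp : Prime p) {a b : ℕ} {c d : α}
    (hc : ¬ p ∣ c) (hd : ¬ p ∣ d) (h : p ^ a * c = p ^ b * d) : a = b ∧ c = d := by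
  have hab : a = b := le_antisymm (ppow_le hp hd h.symm) (ppow_le hp hc h)
  subst hab
  exact ⟨rfl, mul_left_cancel₀ (pow_ne_zero a hp.ne_zero) h⟩

lemma cofactor_homog {p q : Poly2 k} {a n : ℕ}
    (hp : p.IsHomogeneous a) (hpq : (p * q).IsHomogeneous n) (hp0 : p ≠ 0) :
    q.IsHomogeneous (n - a) := by
  classical
  by_cases hq0 : q = 0
  · simp [hq0, MvPolynomial.isHomogeneous_zero]
  have hmain : ∀ i, homogeneousComponent i q ≠ 0 → i = n - a := by
    intro i hi
    have hirange : i ∈ Finset.range (q.totalDegree + 1) := by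
      rw [Finset.mem_range]
      by_contra hgt
      have hlt : q.totalDegree < i := by omega
      exact hi (homogeneousComponent_eq_zero i q hlt)
    have h1 : p * q = ∑ i' ∈ Finset.range (q.totalDegree + 1),
        p * homogeneousComponent i' q := by
      rw [← Finset.mul_sum, sum_homogeneousComponent]
    have h2 : homogeneousComponent (a + i) (p * q) = p * homogeneousComponent i q := by
      rw [h1, map_sum, Finset.sum_eq_single i]
      · rw [homogeneousComponent_of_mem
          ((mem_homogeneousSubmodule _ _).mpr (hp.mul (homogeneousComponent_isHomogeneous i q))),
          if_pos rfl]
      · intro b _ hb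
        rw [homogeneousComponent_of_mem
          ((mem_homogeneousSubmodule _ _).mpr (hp.mul (homogeneousComponent_isHomogeneous b q))),
          if_neg (by omega)]
      · intro habs
        exact absurd hirange habs
    have h3 : homogeneousComponent (a + i) (p * q) = if a + i = n then p * q else 0 :=
      homogeneousComponent_of_mem ((mem_homogeneousSubmodule _ _).mpr hpq)
    have hne : p * homogeneousComponent i q ≠ 0 := mul_ne_zero hp0 hi
    rw [h2] at h3
    by_cases hain : a + i = n
    · omega
    · rw [if_neg hain] at h3
      exact absurd h3 hne
  rw [← mem_homogeneousSubmodule, ← sum_homogeneousComponent q]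
  apply Submodule.sum_mem
  intro i _
  by_cases h : homogeneousComponent i q = 0
  · simp [h]
  · rw [hmain i h]
    exact homogeneousComponent_mem _ _

lemma not_X1_dvd {h : Poly2 k} (hy : ¬ (X 1 : Poly2 k) ∣ h) (a : ℕ) :
    ¬ (X 1 : Poly2 k) ∣ X 0 ^ a * h := by
  intro hd
  rcases (primeX1.dvd_mul).mp hd with h1 | h1
  · exact (by simp : ¬ (X 1 : Poly2 k) ∣ X 0) (primeX1.dvd_of_dvd_pow h1)
  · exact hy h1

/-- Uniqueness of the `x^a · h · y^b` factorization. -/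
lemma xy_uniq {h h' : Poly2 k} {a b a' b' : ℕ}
    (hx1 : ¬ (X 0 : Poly2 k) ∣ h) (hy1 : ¬ (X 1 : Poly2 k) ∣ h)
    (hx2 : ¬ (X 0 : Poly2 k) ∣ h') (hy2 : ¬ (X 1 : Poly2 k) ∣ h')
    (heq : X 0 ^ a * h * X 1 ^ b = X 0 ^ a' * h' * X 1 ^ b') :
    a = a' ∧ b = b' ∧ h = h' := by
  have h1 : (X 1:Poly2 k) ^ b * (X 0 ^ a * h) = X 1 ^ b' * (X 0 ^ a' * h') := by
    rw [show (X 1:Poly2 k) ^ b * (X 0 ^ a * h) = X 0 ^ a * h * X 1 ^ b from by ring, heq]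
    ring
  obtain ⟨hb, h2⟩ := ppow_uniq primeX1 (not_X1_dvd hy1 a) (not_X1_dvd hy2 a') h1
  obtain ⟨ha, h3⟩ := ppow_uniq primeX0 hx1 hx2 h2
  exact ⟨ha, hb, h3⟩

/-- Decomposition of a nonzero homogeneous polynomial as `x^a · h · y^b`. -/
lemma decomp {v : Poly2 k} (hv0 : v ≠ 0) {m : ℕ} (hvm : v.IsHomogeneous m) :
    ∃ (e a b : ℕ) (h : Poly2 k), h.IsHomogeneous e ∧ h ≠ 0 ∧
      ¬ (X 0 : Poly2 k) ∣ h ∧ ¬ (X 1 : Poly2 k) ∣ h ∧ a + b + e = m ∧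
      v = X 0 ^ a * h * X 1 ^ b := by
  obtain ⟨b, u, hyu, hvu⟩ := WfDvdMonoid.max_power_factor hv0 primeX1.irreducible
  have hu0 : u ≠ 0 := by rintro rfl; simp at hvu; exact hv0 hvu
  obtain ⟨a, h, hxh, huh⟩ := WfDvdMonoid.max_power_factor hu0 primeX0.irreducible
  have hh0 : h ≠ 0 := by rintro rfl; simp at huh; exact hu0 huh
  have hyh : ¬ (X 1 : Poly2 k) ∣ h :=
    fun hd => hyu (hd.trans (show h ∣ u by rw [huh]; exact dvd_mul_left h _))
  have hveq : v = X 0 ^ a * h * X 1 ^ b := by rw [hvu, huh]; ring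
  have hpq : ((X 0:Poly2 k) ^ a * X 1 ^ b) * h = v := by rw [hveq]; ring
  have hph : ((X 0:Poly2 k) ^ a * X 1 ^ b).IsHomogeneous (a + b) :=
    (isHomogeneous_X_pow _ _).mul (isHomogeneous_X_pow _ _)
  have hhe : h.IsHomogeneous (m - (a + b)) :=
    cofactor_homog hph (hpq ▸ hvm) (mul_ne_zero (pow_ne_zero _ primeX0.ne_zero)
      (pow_ne_zero _ primeX1.ne_zero))
  have hle : a + b ≤ m := by
    have h2 := hph.mul hhe
    rw [hpq] at h2
    have := hvm.inj_right h2 hv0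
    omega
  exact ⟨m - (a + b), a, b, h, hhe, hh0, hxh, hyh, by omega, hveq⟩

/-! ### chains -/

/-- The `i`-th vertex of the chain of `h` of length `dd`. -/
def chainV (h : Poly2 k) (dd i : ℕ) : Poly2 k := X 0 ^ (dd - i) * h * X 1 ^ i

/-- `Core n h e dd` : `h` is a nonzero homogeneous polynomial of degree `e`,
divisible by neither variable, with `dd + e = n`. -/
def Core (n : ℕ) (h : Poly2 k) (e dd : ℕ) : Prop :=
  h.IsHomogeneous e ∧ h ≠ 0 ∧ ¬ (X 0 : Poly2 k) ∣ h ∧ ¬ (X 1 : Poly2 k) ∣ h ∧ dd + e = n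

lemma chainV_ne_zero {h : Poly2 k} (hh : h ≠ 0) (dd i : ℕ) : chainV h dd i ≠ 0 :=
  mul_ne_zero (mul_ne_zero (pow_ne_zero _ primeX0.ne_zero) hh) (pow_ne_zero _ primeX1.ne_zero)

lemma chainV_mem {n : ℕ} {h : Poly2 k} {e dd : ℕ} (hc : Core n h e dd) {i : ℕ} (hi : i ≤ dd) :
    chainV h dd i ∈ Vd k n := by
  obtain ⟨hh, -, -, -, hdn⟩ := hc
  rw [mem_homogeneousSubmodule]
  have h2 := ((isHomogeneous_X_pow (0:Fin 2) (dd-i)).mul hh).mul (isHomogeneous_X_pow (1:Fin 2) i)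
  have hdeg : (dd - i) + e + i = n := by omega
  exact hdeg ▸ h2

lemma chainV_uniq {n : ℕ} {h h' : Poly2 k} {e e' dd dd' i j : ℕ}
    (hc : Core n h e dd) (hc' : Core n h' e' dd')
    (heq : chainV h dd i = chainV h' dd' j) :
    h = h' ∧ dd = dd' ∧ i = j := by
  obtain ⟨hh, hh0, hhx, hhy, hdn⟩ := hc
  obtain ⟨hh', hh0', hhx', hhy', hdn'⟩ := hc'
  obtain ⟨-, hij, hhh⟩ := xy_uniq hhx hhy hhx' hhy' heq
  subst hhh
  have he : e = e' := hh.inj_right hh' hh0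
  exact ⟨rfl, by omega, hij⟩

end Stmt1Aux
end
-- ===================== quiver-level auxiliary lemmas =====================
noncomputable section
open MvPolynomial

namespace Stmt1Aux

variable {k : Type} [Field k] {n : ℕ}

lemma sval (a : (PQuiv k n).A) : (((PQuiv k n).s a : (PQuiv k n).V) : Poly2 k) = X 0 * a.1 := rfl
lemma tval (a : (PQuiv k n).A) : (((PQuiv k n).t a : (PQuiv k n).V) : Poly2 k) = X 1 * a.1 := rfl

lemma mem_Vm_of {g : Poly2 k} {m : ℕ} (hg : g.IsHomogeneous m) (hmn : m + 1 = n) :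
    g ∈ Vm k n := by
  cases n with
  | zero => omega
  | succ n' =>
      have : m = n' := by omega
      subst this
      exact (mem_homogeneousSubmodule _ _).mpr hg

lemma arrow_homog {a : Poly2 k} (ha : a ∈ Vm k n) (ha0 : a ≠ 0) :
    a.IsHomogeneous (n - 1) ∧ 1 ≤ n := by
  cases n with
  | zero => exact absurd ((Submodule.mem_bot k).mp ha) ha0
  | succ n' => exact ⟨(mem_homogeneousSubmodule _ _).mp ha, by omega⟩

/-- The arrow connecting consecutive chain vertices. -/
lemma step_conn {h : Poly2 k} {e dd : ℕ} (hc : Core n h e dd) {i : ℕ} (hi : i < dd)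
    (hv : chainV h dd i ∈ Vd k n) (hw : chainV h dd (i+1) ∈ Vd k n) :
    ∃ a : (PQuiv k n).A, (PQuiv k n).s a = ⟨chainV h dd i, hv⟩ ∧
      (PQuiv k n).t a = ⟨chainV h dd (i+1), hw⟩ := by
  obtain ⟨hh, hh0, hhx, hhy, hdn⟩ := hc
  have hgh : ((X 0:Poly2 k) ^ (dd-1-i) * h * X 1 ^ i).IsHomogeneous ((dd-1-i) + e + i) :=
    ((isHomogeneous_X_pow (0:Fin 2) (dd-1-i)).mul hh).mul (isHomogeneous_X_pow (1:Fin 2) i)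
  have hmem : (X 0:Poly2 k) ^ (dd-1-i) * h * X 1 ^ i ∈ Vm k n :=
    mem_Vm_of hgh (by omega)
  refine ⟨⟨_, hmem⟩, ?_, ?_⟩
  · apply Subtype.ext
    rw [sval]
    show (X 0:Poly2 k) * (X 0 ^ (dd-1-i) * h * X 1 ^ i) = X 0 ^ (dd - i) * h * X 1 ^ i
    rw [show dd - i = (dd-1-i) + 1 by omega]
    ring
  · apply Subtype.ext
    rw [tval]
    show (X 1:Poly2 k) * (X 0 ^ (dd-1-i) * h * X 1 ^ i) = X 0 ^ (dd - (i+1)) * h * X 1 ^ (i+1)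
    rw [show dd - (i+1) = dd-1-i by omega]
    ring

lemma conn_chain {h : Poly2 k} {e dd : ℕ} (hc : Core n h e dd) :
    ∀ i (hi : i ≤ dd) (hu : chainV h dd i ∈ Vd k n) (hf : chainV h dd 0 ∈ Vd k n),
      (PQuiv k n).connRel ⟨chainV h dd i, hu⟩ ⟨chainV h dd 0, hf⟩ := by
  intro i
  induction i with
  | zero => intro _ hu hf; exact Relation.EqvGen.refl _
  | succ i ih =>
      intro hi hu hf
      have hi' : i ≤ dd := by omega
      have hu' : chainV h dd i ∈ Vd k n := chainV_mem hc hi'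
      obtain ⟨a, hs, ht⟩ := step_conn hc (show i < dd by omega) hu' hu
      have h1 : (PQuiv k n).connRel ⟨chainV h dd i, hu'⟩ ⟨chainV h dd (i+1), hu⟩ :=
        Relation.EqvGen.rel _ _ ⟨a, hs, ht⟩
      exact Relation.EqvGen.trans _ _ _ (Relation.EqvGen.symm _ _ h1) (ih hi' hu' hf)

/-- The characterization of connectivity, polynomial level. -/
def Crel (k : Type) [Field k] (n : ℕ) (v w : Poly2 k) : Prop :=
  (v = 0 ∧ w = 0) ∨ ∃ (h : Poly2 k) (e dd i j : ℕ), Core n h e dd ∧ i ≤ dd ∧ j ≤ dd ∧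
    v = chainV h dd i ∧ w = chainV h dd j

lemma Crel_refl {v : Poly2 k} (hv : v ∈ Vd k n) : Crel k n v v := by
  by_cases hv0 : v = 0
  · exact Or.inl ⟨hv0, hv0⟩
  · obtain ⟨e, a, b, h, hh, hh0, hhx, hhy, habe, hveq⟩ :=
      decomp hv0 ((mem_homogeneousSubmodule _ _).mp hv)
    refine Or.inr ⟨h, e, a + b, b, b, ⟨hh, hh0, hhx, hhy, by omega⟩, by omega, by omega, ?_, ?_⟩ <;>
    · rw [hveq]
      show _ = X 0 ^ (a + b - b) * h * X 1 ^ b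
      rw [show a + b - b = a by omega]

lemma Crel_symm {v w : Poly2 k} (hvw : Crel k n v w) : Crel k n w v := by
  rcases hvw with ⟨h1, h2⟩ | ⟨h, e, dd, i, j, hc, hi, hj, hv, hw⟩
  · exact Or.inl ⟨h2, h1⟩
  · exact Or.inr ⟨h, e, dd, j, i, hc, hj, hi, hw, hv⟩

lemma Crel_trans {u v w : Poly2 k} (h1 : Crel k n u v) (h2 : Crel k n v w) : Crel k n u w := by
  rcases h1 with ⟨hu0, hv0⟩ | ⟨h, e, dd, i, j, hc, hi, hj, hu, hv⟩
  · rcases h2 with ⟨-, hw0⟩ | ⟨h, e, dd, i, j, hc, hi, hj, hv, hw⟩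
    · exact Or.inl ⟨hu0, hw0⟩
    · exact ((chainV_ne_zero hc.2.1 dd i) (hv.symm.trans hv0)).elim
  · rcases h2 with ⟨hv0, hw0⟩ | ⟨h', e', dd', i', j', hc', hi', hj', hv', hw⟩
    · exact absurd (hv ▸ hv0) (chainV_ne_zero hc.2.1 dd j)
    · obtain ⟨hhh, hddd, hij⟩ := chainV_uniq hc hc' (hv ▸ hv' ▸ rfl : chainV h dd j = chainV h' dd' i')
      subst hhh hddd
      exact Or.inr ⟨h, e, dd, i, j', hc, hi, by omega, hu, hw⟩

lemma conn_to_Crel {u w : (PQuiv k n).V} (hconn : (PQuiv k n).connRel u w) :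
    Crel k n u.1 w.1 := by
  induction hconn with
  | rel u w hr =>
      obtain ⟨a, hs, ht⟩ := hr
      have hu1 : (u : Poly2 k) = X 0 * a.1 := by rw [← hs]; rfl
      have hw1 : (w : Poly2 k) = X 1 * a.1 := by rw [← ht]; rfl
      by_cases ha0 : (a : Poly2 k) = 0
      · exact Or.inl ⟨by rw [hu1, ha0, mul_zero], by rw [hw1, ha0, mul_zero]⟩
      · obtain ⟨hahom, hn1⟩ := arrow_homog a.2 ha0
        obtain ⟨e, α, β, h, hh, hh0, hhx, hhy, habe, haeq⟩ := decomp ha0 hahom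
        refine Or.inr ⟨h, e, α + β + 1, β, β + 1, ⟨hh, hh0, hhx, hhy, by omega⟩,
          by omega, by omega, ?_, ?_⟩
        · rw [hu1, haeq]
          show _ = X 0 ^ (α + β + 1 - β) * h * X 1 ^ β
          rw [show α + β + 1 - β = α + 1 by omega]
          ring
        · rw [hw1, haeq]
          show _ = X 0 ^ (α + β + 1 - (β+1)) * h * X 1 ^ (β+1)
          rw [show α + β + 1 - (β+1) = α by omega]
          ring
  | refl u => exact Crel_refl u.2
  | symm u w _ ih => exact Crel_symm ih
  | trans u v w _ _ ih1 ih2 => exact Crel_trans ih1 ih2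

lemma Crel_to_conn {v w : Poly2 k} (hvw : Crel k n v w)
    (hv : v ∈ Vd k n) (hw : w ∈ Vd k n) :
    (PQuiv k n).connRel ⟨v, hv⟩ ⟨w, hw⟩ := by
  rcases hvw with ⟨hv0, hw0⟩ | ⟨h, e, dd, i, j, hc, hi, hj, hveq, hweq⟩
  · have : (⟨v, hv⟩ : (PQuiv k n).V) = ⟨w, hw⟩ := Subtype.ext (hv0.trans hw0.symm)
    rw [this]
    exact Relation.EqvGen.refl _
  · have hf : chainV h dd 0 ∈ Vd k n := chainV_mem hc (by omega)
    have h1 : (⟨v, hv⟩ : (PQuiv k n).V) = ⟨chainV h dd i, chainV_mem hc hi⟩ := Subtype.ext hveq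
    have h2 : (⟨w, hw⟩ : (PQuiv k n).V) = ⟨chainV h dd j, chainV_mem hc hj⟩ := Subtype.ext hweq
    rw [h1, h2]
    exact Relation.EqvGen.trans _ _ _ (conn_chain hc i hi _ hf)
      (Relation.EqvGen.symm _ _ (conn_chain hc j hj _ hf))

end Stmt1Aux
end
-- ===================== chain arrows =====================
noncomputable section
open MvPolynomial

namespace Stmt1Aux

variable {k : Type} [Field k] {n : ℕ}

/-- The `i`-th arrow of the chain of `h` of length `dd`. -/
def chainA (h : Poly2 k) (dd i : ℕ) : Poly2 k := X 0 ^ (dd - 1 - i) * h * X 1 ^ i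

lemma chainA_mem {h : Poly2 k} {e dd : ℕ} (hc : Core n h e dd) {i : ℕ} (hi : i < dd) :
    chainA h dd i ∈ Vm k n := by
  obtain ⟨hh, -, -, -, hdn⟩ := hc
  have hgh : (chainA h dd i).IsHomogeneous ((dd-1-i) + e + i) :=
    ((isHomogeneous_X_pow (0:Fin 2) (dd-1-i)).mul hh).mul (isHomogeneous_X_pow (1:Fin 2) i)
  exact mem_Vm_of hgh (by omega)

lemma sval_chainA {h : Poly2 k} {dd i : ℕ} (hi : i < dd) :
    (X 0 : Poly2 k) * chainA h dd i = chainV h dd i := by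
  show (X 0:Poly2 k) * (X 0 ^ (dd-1-i) * h * X 1 ^ i) = X 0 ^ (dd - i) * h * X 1 ^ i
  rw [show dd - i = (dd-1-i) + 1 by omega]
  ring

lemma tval_chainA {h : Poly2 k} {dd i : ℕ} (hi : i < dd) :
    (X 1 : Poly2 k) * chainA h dd i = chainV h dd (i+1) := by
  show (X 1:Poly2 k) * (X 0 ^ (dd-1-i) * h * X 1 ^ i) = X 0 ^ (dd - (i+1)) * h * X 1 ^ (i+1)
  rw [show dd - (i+1) = dd-1-i by omega]
  ring

lemma not_X0_dvd_chain_top {h : Poly2 k} (hhx : ¬ (X 0 : Poly2 k) ∣ h) (dd : ℕ) :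
    ¬ (X 0 : Poly2 k) ∣ chainV h dd dd := by
  intro hdvd
  have h1 : chainV h dd dd = h * X 1 ^ dd := by
    show (X 0:Poly2 k) ^ (dd - dd) * h * X 1 ^ dd = _
    rw [Nat.sub_self, pow_zero, one_mul]
  rw [h1] at hdvd
  rcases primeX0.dvd_mul.mp hdvd with h2 | h2
  · exact hhx h2
  · exact (by simp : ¬ (X 0 : Poly2 k) ∣ X 1) (primeX0.dvd_of_dvd_pow h2)

lemma X1_dvd_chainV {h : Poly2 k} {dd i : ℕ} (hi : i ≠ 0) :
    (X 1 : Poly2 k) ∣ chainV h dd i :=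
  dvd_mul_of_dvd_right (dvd_pow_self _ hi) _

end Stmt1Aux
end
/-- STATEMENT 1, parts (i)-(iv). In part (iv) the isomorphism with the linear
quiver `A_{d+1}` is given explicitly: the vertex `i` corresponds to
`x^{d-i}·h·y^i = x^{-i}·f·y^i` and the arrow `i` (from `i` to `i+1`) corresponds
to `x^{d-1-i}·h·y^i = x^{-i-1}·f·y^i`, where `h = x^{-d}·f`. -/
theorem stmt1 (k : Type) [Field k] (n : ℕ) :
    -- (i) every vertex is the start of at most one arrow and the terminus of
    -- at most one arrow
    (Function.Injective (PQuiv k n).s ∧ Function.Injective (PQuiv k n).t) ∧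
    -- (ii) every connected component contains exactly one vertex `f` with
    -- `f = 0` or `y ∤ f`
    (∀ v : (PQuiv k n).V, ∃! f : (PQuiv k n).V,
        (PQuiv k n).connRel f v ∧
          ((f : Poly2 k) = 0 ∨ ¬ (X 1 : Poly2 k) ∣ (f : Poly2 k))) ∧
    -- (iii) the connected component of `0` consists of the single vertex `0`
    -- together with the single (loop) arrow `0 ∈ V_{n-1}`
    ({u : (PQuiv k n).V | (PQuiv k n).connRel u 0} = {0} ∧
     {a : (PQuiv k n).A | (PQuiv k n).connRel ((PQuiv k n).s a) 0} = {0} ∧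
     (PQuiv k n).s 0 = 0 ∧ (PQuiv k n).t 0 = 0) ∧
    -- (iv) for `f ≠ 0` with `y ∤ f` and `d = max {r | x^r ∣ f}`, the connected
    -- component of `f` is isomorphic to the linear quiver `A_{d+1}`, with the
    -- explicit vertices and arrows described above
    (∀ f : (PQuiv k n).V, (f : Poly2 k) ≠ 0 → ¬ (X 1 : Poly2 k) ∣ (f : Poly2 k) →
      ∀ d : ℕ, ((X 0 : Poly2 k) ^ d ∣ (f : Poly2 k) ∧
          ¬ (X 0 : Poly2 k) ^ (d+1) ∣ (f : Poly2 k)) →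
      ∃ h : Poly2 k, (f : Poly2 k) = (X 0) ^ d * h ∧
        ∃ (φ₀ : (linearQuiv d).V → ((PQuiv k n).component f).V)
          (φ₁ : (linearQuiv d).A → ((PQuiv k n).component f).A),
          Function.Bijective φ₀ ∧ Function.Bijective φ₁ ∧
          (∀ a, ((PQuiv k n).component f).s (φ₁ a) = φ₀ ((linearQuiv d).s a)) ∧
          (∀ a, ((PQuiv k n).component f).t (φ₁ a) = φ₀ ((linearQuiv d).t a)) ∧
          (∀ i : Fin (d+1),
            (((φ₀ i).1 : Poly2 k)) = (X 0) ^ (d - i.1) * h * (X 1) ^ i.1) ∧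
          (∀ i : Fin d,
            (((φ₁ i).1 : Poly2 k)) = (X 0) ^ (d - 1 - i.1) * h * (X 1) ^ i.1)) := by
  classical
  refine ⟨⟨?_, ?_⟩, ?_, ⟨?_, ?_, ?_, ?_⟩, ?_⟩
  -- (i) s injective
  · intro a b hab
    apply Subtype.ext
    have h1 : (X 0 : Poly2 k) * (a : Poly2 k) = X 0 * (b : Poly2 k) := by
      have h2 := congrArg Subtype.val hab
      exact h2
    exact mul_left_cancel₀ Stmt1Aux.primeX0.ne_zero h1
  -- (i) t injective
  · intro a b hab
    apply Subtype.ext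
    have h1 : (X 1 : Poly2 k) * (a : Poly2 k) = X 1 * (b : Poly2 k) := by
      have h2 := congrArg Subtype.val hab
      exact h2
    exact mul_left_cancel₀ Stmt1Aux.primeX1.ne_zero h1
  -- (ii)
  · intro v
    by_cases hv0 : (v : Poly2 k) = 0
    · refine ⟨0, ⟨?_, Or.inl (by simp)⟩, ?_⟩
      · have h0 : (0 : (PQuiv k n).V) = v := Subtype.ext (by simp [hv0])
        rw [h0]
        exact Relation.EqvGen.refl _
      · rintro g ⟨hconn, -⟩
        rcases Stmt1Aux.conn_to_Crel hconn with ⟨hg0, -⟩ |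
          ⟨h', e', dd', i', j', hc', -, -, -, hveq'⟩
        · exact Subtype.ext (by simp [hg0])
        · exact (Stmt1Aux.chainV_ne_zero hc'.2.1 dd' j' (hveq'.symm.trans hv0)).elim
    · obtain ⟨e, α, β, h, hh, hh0, hhx, hhy, habe, hveq⟩ :=
        Stmt1Aux.decomp hv0 ((mem_homogeneousSubmodule _ _).mp v.2)
      have hcore : Stmt1Aux.Core n h e (α + β) := ⟨hh, hh0, hhx, hhy, by omega⟩
      have hvch : (v : Poly2 k) = Stmt1Aux.chainV h (α + β) β := by
        rw [hveq]
        show _ = X 0 ^ (α + β - β) * h * X 1 ^ β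
        rw [show α + β - β = α by omega]
      refine ⟨⟨Stmt1Aux.chainV h (α + β) 0, Stmt1Aux.chainV_mem hcore (Nat.zero_le _)⟩,
        ⟨?_, Or.inr ?_⟩, ?_⟩
      · exact Stmt1Aux.Crel_to_conn
          (Or.inr ⟨h, e, α + β, 0, β, hcore, Nat.zero_le _, by omega, rfl, hvch⟩) _ v.2
      · intro hdvd
        apply Stmt1Aux.not_X1_dvd hhy (α + β)
        simpa [Stmt1Aux.chainV] using hdvd
      · rintro g ⟨hconn, hor⟩
        rcases Stmt1Aux.conn_to_Crel hconn with ⟨-, hv0'⟩ |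
          ⟨h', e', dd', i', j', hc', hi', hj', hgeq, hveq'⟩
        · exact absurd hv0' hv0
        · obtain ⟨hhh, hddd, hjβ⟩ := Stmt1Aux.chainV_uniq hc' hcore (hveq'.symm.trans hvch)
          subst hhh hddd
          rcases hor with hg0 | hgy
          · exact ((Stmt1Aux.chainV_ne_zero hh0 _ i') (hgeq.symm.trans hg0)).elim
          · have hi0 : i' = 0 := by
              by_contra hne
              exact hgy (by rw [hgeq]; exact Stmt1Aux.X1_dvd_chainV hne)
            subst hi0
            exact Subtype.ext hgeq
  -- (iii) vertices
  · ext u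
    simp only [Set.mem_setOf_eq, Set.mem_singleton_iff]
    constructor
    · intro hconn
      rcases Stmt1Aux.conn_to_Crel hconn with ⟨hu0, -⟩ |
        ⟨h', e', dd', i', j', hc', -, -, -, hveq'⟩
      · exact Subtype.ext (by simpa using hu0)
      · exact (Stmt1Aux.chainV_ne_zero hc'.2.1 dd' j'
          (hveq'.symm.trans (ZeroMemClass.coe_zero _))).elim
    · rintro rfl
      exact Relation.EqvGen.refl _
  -- (iii) arrows
  · ext a
    simp only [Set.mem_setOf_eq, Set.mem_singleton_iff]
    constructor
    · intro hconn
      rcases Stmt1Aux.conn_to_Crel hconn with ⟨hu0, -⟩ |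
        ⟨h', e', dd', i', j', hc', -, -, -, hveq'⟩
      · have h1 : (X 0 : Poly2 k) * (a : Poly2 k) = 0 := (Stmt1Aux.sval a) ▸ hu0
        rcases mul_eq_zero.mp h1 with h2 | h2
        · exact (Stmt1Aux.primeX0.ne_zero h2).elim
        · exact Subtype.ext (by simpa using h2)
      · exact (Stmt1Aux.chainV_ne_zero hc'.2.1 dd' j'
          (hveq'.symm.trans (ZeroMemClass.coe_zero _))).elim
    · rintro rfl
      have h0 : (mulX k n) 0 = 0 := map_zero (mulX k n)
      rw [h0]
      exact Relation.EqvGen.refl _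
  -- (iii) s 0 = 0
  · exact map_zero (mulX k n)
  -- (iii) t 0 = 0
  · exact map_zero (mulY k n)
  -- (iv)
  · rintro f hf0 hfy d ⟨⟨h, hfh⟩, hndvd⟩
    have hh0 : h ≠ 0 := by rintro rfl; rw [mul_zero] at hfh; exact hf0 hfh
    have hhx : ¬ (X 0 : Poly2 k) ∣ h := by
      rintro ⟨c, rfl⟩
      exact hndvd ⟨c, by rw [hfh]; ring⟩
    have hhy : ¬ (X 1 : Poly2 k) ∣ h := by
      intro hd
      exact hfy (by rw [hfh]; exact dvd_mul_of_dvd_right hd _)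
    have hfhom := (mem_homogeneousSubmodule _ _).mp f.2
    have hh : h.IsHomogeneous (n - d) :=
      Stmt1Aux.cofactor_homog (isHomogeneous_X_pow _ _) (by rw [← hfh]; exact hfhom)
        (pow_ne_zero _ Stmt1Aux.primeX0.ne_zero)
    have hdn : d + (n - d) = n := by
      have h2 := (isHomogeneous_X_pow (0:Fin 2) d).mul hh
      rw [← hfh] at h2
      have h3 := hfhom.inj_right h2 hf0
      omega
    have hcore : Stmt1Aux.Core n h (n - d) d := ⟨hh, hh0, hhx, hhy, hdn⟩
    have hfch : (f : Poly2 k) = Stmt1Aux.chainV h d 0 := by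
      rw [hfh]
      show _ = X 0 ^ (d - 0) * h * X 1 ^ 0
      rw [Nat.sub_zero, pow_zero, mul_one]
    have hfeq : f = (⟨Stmt1Aux.chainV h d 0, Stmt1Aux.chainV_mem hcore (Nat.zero_le d)⟩ :
        (PQuiv k n).V) := Subtype.ext hfch
    have hconn : ∀ i (hi : i ≤ d),
        (PQuiv k n).connRel ⟨Stmt1Aux.chainV h d i, Stmt1Aux.chainV_mem hcore hi⟩ f := by
      intro i hi
      rw [hfeq]
      exact Stmt1Aux.conn_chain hcore i hi _ _
    refine ⟨h, hfh,
      fun i => ⟨⟨Stmt1Aux.chainV h d i.1, Stmt1Aux.chainV_mem hcore (Nat.lt_succ_iff.mp i.isLt)⟩,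
        hconn i.1 (Nat.lt_succ_iff.mp i.isLt)⟩,
      fun i => ⟨⟨Stmt1Aux.chainA h d i.1, Stmt1Aux.chainA_mem hcore i.isLt⟩, ?_⟩,
      ⟨?_, ?_⟩, ⟨?_, ?_⟩, ?_, ?_, fun i => rfl, fun i => rfl⟩
    -- arrow conn
    · have hs : (PQuiv k n).s ⟨Stmt1Aux.chainA h d i.1, Stmt1Aux.chainA_mem hcore i.isLt⟩ =
          ⟨Stmt1Aux.chainV h d i.1, Stmt1Aux.chainV_mem hcore (le_of_lt i.isLt)⟩ :=
        Subtype.ext ((Stmt1Aux.sval _).trans (Stmt1Aux.sval_chainA i.isLt))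
      rw [hs]
      exact hconn i.1 (le_of_lt i.isLt)
    -- φ₀ injective
    · intro i j hij
      have h1 : Stmt1Aux.chainV h d i.1 = Stmt1Aux.chainV h d j.1 :=
        congrArg (fun z => ((z.1 : (PQuiv k n).V) : Poly2 k)) hij
      obtain ⟨-, -, hij'⟩ := Stmt1Aux.chainV_uniq hcore hcore h1
      exact Fin.ext hij'
    -- φ₀ surjective
    · intro u
      rcases Stmt1Aux.conn_to_Crel u.2 with ⟨-, hf0'⟩ |
        ⟨h', e', dd', i', j', hc', hi', hj', hueq, hfeq'⟩
      · exact absurd hf0' hf0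
      · have hj0 : j' = 0 := by
          by_contra hne
          exact hfy (by rw [hfeq']; exact Stmt1Aux.X1_dvd_chainV hne)
        subst hj0
        obtain ⟨hhh, hddd, -⟩ := Stmt1Aux.chainV_uniq hc' hcore (hfeq'.symm.trans hfch)
        have hi2 : i' ≤ d := hddd ▸ hi'
        have hueq2 : ((u.1 : (PQuiv k n).V) : Poly2 k) = Stmt1Aux.chainV h d i' := by
          rw [hueq, hhh, hddd]
        exact ⟨⟨i', by omega⟩, Subtype.ext (Subtype.ext hueq2.symm)⟩
    -- φ₁ injective
    · intro i j hij
      have h1 : Stmt1Aux.chainA h d i.1 = Stmt1Aux.chainA h d j.1 :=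
        congrArg (fun z => ((z.1 : (PQuiv k n).A) : Poly2 k)) hij
      obtain ⟨-, hij', -⟩ := Stmt1Aux.xy_uniq hhx hhy hhx hhy h1
      exact Fin.ext hij'
    -- φ₁ surjective
    · intro b
      rcases Stmt1Aux.conn_to_Crel b.2 with ⟨-, hf0'⟩ |
        ⟨h', e', dd', i', j', hc', hi', hj', hseq, hfeq'⟩
      · exact absurd hf0' hf0
      · have hj0 : j' = 0 := by
          by_contra hne
          exact hfy (by rw [hfeq']; exact Stmt1Aux.X1_dvd_chainV hne)
        subst hj0
        obtain ⟨hhh, hddd, -⟩ := Stmt1Aux.chainV_uniq hc' hcore (hfeq'.symm.trans hfch)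
        have hi2 : i' ≤ d := hddd ▸ hi'
        have hseq' : (X 0 : Poly2 k) * (b.1 : Poly2 k) = Stmt1Aux.chainV h d i' :=
          ((Stmt1Aux.sval b.1).symm.trans hseq).trans (by rw [hhh, hddd])
        have hilt : i' < d := by
          rcases Nat.lt_or_ge i' d with h1 | h1
          · exact h1
          · have hde : i' = d := by omega
            rw [hde] at hseq'
            exact (Stmt1Aux.not_X0_dvd_chain_top hhx d ⟨_, hseq'.symm⟩).elim
        have hb1 : (b.1 : (PQuiv k n).A).1 = Stmt1Aux.chainA h d i' :=
          mul_left_cancel₀ Stmt1Aux.primeX0.ne_zero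
            (hseq'.trans (Stmt1Aux.sval_chainA hilt).symm)
        exact ⟨⟨i', hilt⟩, Subtype.ext (Subtype.ext hb1.symm)⟩
    -- commutes with s
    · intro a
      apply Subtype.ext
      apply Subtype.ext
      exact (Stmt1Aux.sval _).trans (Stmt1Aux.sval_chainA a.isLt)
    -- commutes with t
    · intro a
      apply Subtype.ext
      apply Subtype.ext
      exact (Stmt1Aux.tval _).trans (Stmt1Aux.tval_chainA a.isLt)

end
end

section
/- Let k be a field and n ≥ 0. The quiver |I(n)|, with vertex set the dual space V_{n−1}* = Hom_k(V_{n−1}, k), arrow set V_n* = Hom_k(V_n, k), start map φ ↦ φ ∘ (multiplication by x) and terminus map φ ↦ φ ∘ (multiplication by y) (the duals of the multiplication maps V_{n−1} → V_n), is isomorphic, as a quiver, to the de Bruijn quiver of dimension n on the set k: its vertex set is k^n, its arrow set is k^{n+1}, and the arrow (a₀,a₁,…,aₙ) has start (a₀,…,a_{n−1}) and terminus (a₁,…,aₙ). -/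
open MvPolynomial

namespace Stmt3Aux
open MvPolynomial

abbrev Poly2' (k : Type) [Field k] := MvPolynomial (Fin 2) k

noncomputable def dexp (n : ℕ) (i : Fin (n+1)) : Fin 2 →₀ ℕ :=
  Finsupp.single (0 : Fin 2) (n - (i:ℕ)) + Finsupp.single (1 : Fin 2) (i:ℕ)

lemma dexp_apply0 (n : ℕ) (i : Fin (n+1)) : dexp n i 0 = n - i := by
  simp [dexp, Finsupp.single_apply]

lemma dexp_apply1 (n : ℕ) (i : Fin (n+1)) : dexp n i 1 = i := by
  simp [dexp, Finsupp.single_apply]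

lemma degree_eq (d : Fin 2 →₀ ℕ) : d.degree = d 0 + d 1 := by
  rw [Finsupp.degree_apply, Finset.sum_subset (Finset.subset_univ d.support)]
  · exact Fin.sum_univ_two d
  · intro i _ hi; simpa using (Finsupp.notMem_support_iff.mp hi)

lemma dexp_degree (n : ℕ) (i : Fin (n+1)) : (dexp n i).degree = n := by
  have := i.isLt
  rw [degree_eq, dexp_apply0, dexp_apply1]
  omega

lemma dexp_injective (n : ℕ) : Function.Injective (dexp n) := by
  intro i j h
  have h1 := congrArg (fun d => d 1) h
  simp only [dexp_apply1] at h1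
  exact Fin.ext h1

lemma eq_dexp_of_degree (n : ℕ) {d : Fin 2 →₀ ℕ} (hd : d.degree = n) :
    d = dexp n ⟨d 1, by rw [degree_eq] at hd; omega⟩ := by
  rw [degree_eq] at hd
  ext j
  fin_cases j <;> simp [dexp_apply0, dexp_apply1] <;> omega


variable (k : Type) [Field k]

noncomputable def mono (n : ℕ) (i : Fin (n+1)) :
    homogeneousSubmodule (Fin 2) k n :=
  ⟨monomial (dexp n i) 1,
    (mem_homogeneousSubmodule _ _).mpr (isHomogeneous_monomial 1 (dexp_degree n i))⟩

lemma span (n : ℕ) (p : homogeneousSubmodule (Fin 2) k n) :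
    p = ∑ i : Fin (n+1), coeff (dexp n i) (p : Poly2' k) • mono k n i := by
  have hp : (p : Poly2' k).IsHomogeneous n := (mem_homogeneousSubmodule _ _).mp p.2
  apply Subtype.ext
  rw [Submodule.coe_sum]
  apply MvPolynomial.ext
  intro d
  rw [MvPolynomial.coeff_sum]
  simp only [Submodule.coe_smul, mono, coeff_smul, coeff_monomial, smul_eq_mul, mul_ite,
    mul_one, mul_zero]
  by_cases h : Finsupp.degree d = n
  · obtain ⟨i₀, hi₀⟩ : ∃ i, dexp n i = d := ⟨_, (eq_dexp_of_degree n h).symm⟩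
    have key : ∀ i : Fin (n+1),
        (if dexp n i = d then coeff (dexp n i) (p : Poly2' k) else 0)
        = if i = i₀ then coeff d (p : Poly2' k) else 0 := by
      intro i
      by_cases hi : i = i₀
      · subst hi; simp [hi₀]
      · rw [if_neg hi, if_neg (fun hc => hi (dexp_injective n (hc.trans hi₀.symm)))]
    rw [Finset.sum_congr rfl (fun i _ => key i), Finset.sum_ite_eq' Finset.univ i₀,
      if_pos (Finset.mem_univ i₀)]
  · rw [hp.coeff_eq_zero h, Finset.sum_eq_zero]
    intro i _
    rw [if_neg]
    intro hc
    exact h (hc ▸ dexp_degree n i)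

lemma bij (n : ℕ) :
    Function.Bijective
      (fun (ψ : Module.Dual k (homogeneousSubmodule (Fin 2) k n)) =>
        fun i => ψ (mono k n i)) := by
  constructor
  · intro ψ χ h
    ext p
    rw [span k n p, map_sum, map_sum]
    refine Finset.sum_congr rfl fun i _ => ?_
    rw [map_smul, map_smul]
    exact congrArg _ (congrFun h i)
  · intro a
    refine ⟨∑ i : Fin (n+1), a i • ((lcoeff k (dexp n i)).comp
      (homogeneousSubmodule (Fin 2) k n).subtype), ?_⟩
    funext j
    simp only [LinearMap.sum_apply, LinearMap.smul_apply, LinearMap.comp_apply,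
      Submodule.subtype_apply, mono, lcoeff_apply, coeff_monomial, smul_eq_mul, mul_ite,
      mul_one, mul_zero]
    have key : ∀ i : Fin (n+1),
        (if dexp n j = dexp n i then a i else 0) = if i = j then a j else 0 := by
      intro i
      by_cases hi : i = j
      · subst hi; simp
      · rw [if_neg (fun hc => hi (dexp_injective n (hc.symm))), if_neg hi]
    rw [Finset.sum_congr rfl (fun i _ => key i), Finset.sum_ite_eq' Finset.univ j,
      if_pos (Finset.mem_univ j)]

lemma X0_mul_mono (m : ℕ) (j : Fin (m+1)) :
    X (0 : Fin 2) * monomial (dexp m j) (1:k) = monomial (dexp (m+1) j.castSucc) (1:k) := by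
  have hj : (j:ℕ) ≤ m := Nat.lt_succ_iff.mp j.isLt
  have h : Finsupp.single (0 : Fin 2) 1 + dexp m j = dexp (m+1) j.castSucc := by
    ext i
    fin_cases i <;> simp [dexp, Finsupp.single_apply] <;> omega
  rw [X, monomial_mul, one_mul, h]

lemma X1_mul_mono (m : ℕ) (j : Fin (m+1)) :
    X (1 : Fin 2) * monomial (dexp m j) (1:k) = monomial (dexp (m+1) j.succ) (1:k) := by
  have hj : (j:ℕ) ≤ m := Nat.lt_succ_iff.mp j.isLt
  have h : Finsupp.single (1 : Fin 2) 1 + dexp m j = dexp (m+1) j.succ := by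
    ext i
    fin_cases i <;> simp [dexp, Finsupp.single_apply] <;> omega
  rw [X, monomial_mul, one_mul, h]

end Stmt3Aux


noncomputable section
open MvPolynomial

/-- The quiver `|I(n)|`: vertices `V_{n-1}* `, arrows `V_n*`, start
`φ ↦ φ ∘ (mult. by x)`, terminus `φ ↦ φ ∘ (mult. by y)`. -/
abbrev IQuiv (k : Type) [Field k] (n : ℕ) : Quiv where
  V := Module.Dual k (Vm k n)
  A := Module.Dual k (Vd k n)
  s := (mulX k n).dualMap
  t := (mulY k n).dualMap

/-- The de Bruijn quiver of dimension `n` on a set `A`: vertices `A^n`, arrows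
`A^{n+1}`; the arrow `(a₀,…,aₙ)` starts at `(a₀,…,a_{n-1})` and ends at
`(a₁,…,aₙ)`. -/
def deBruijn (A : Type) (n : ℕ) : Quiv where
  V := Fin n → A
  A := Fin (n+1) → A
  s a := a ∘ Fin.castSucc
  t a := a ∘ Fin.succ

open Stmt3Aux in
/-- `|I(n)|` is isomorphic, as a quiver, to the de Bruijn quiver
of dimension `n` on the set `k`. -/
theorem stmt3 (k : Type) [Field k] (n : ℕ) :
    Quiv.Iso (IQuiv k n) (deBruijn k n) := by
  cases n with
  | zero =>
      refine ⟨fun _ => Fin.elim0, fun ψ i => ψ (mono k 0 i), ?_, ?_, ?_, bij k 0⟩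
      · intro a; funext j; exact j.elim0
      · intro a; funext j; exact j.elim0
      · constructor
        · intro f g _
          ext x
          obtain ⟨x, hx⟩ := x
          have hx0 : x = 0 := by simpa using hx
          subst hx0
          have h0 : (⟨0, hx⟩ : Vm k 0) = 0 := rfl
          rw [h0, map_zero, map_zero]
        · intro a
          exact ⟨0, funext fun j => j.elim0⟩
  | succ m =>
      refine ⟨fun ψ j => ψ (mono k m j), fun ψ i => ψ (mono k (m+1) i), ?_, ?_,
        bij k m, bij k (m+1)⟩
      · intro ψ
        funext j
        show ψ (mono k (m+1) j.castSucc) = ψ (mulX k (m+1) (mono k m j))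
        refine congrArg ψ (Subtype.ext ?_)
        exact (X0_mul_mono k m j).symm
      · intro ψ
        funext j
        show ψ (mono k (m+1) j.succ) = ψ (mulY k (m+1) (mono k m j))
        refine congrArg ψ (Subtype.ext ?_)
        exact (X1_mul_mono k m j).symm

end
end

section
/- Let k be a field and n ≥ 0. Let A_{n+1} be the linear quiver with vertex set {1,…,n+1} and arrow set {1,…,n}, where arrow i has start i and terminus i+1. Let s_*, t_* : k^{(Γ₁)} → k^{(Γ₀)} be the k-linear maps between the free vector spaces on the arrow set and the vertex set induced on basis elements by s and t. Then there exist k-linear isomorphisms ψ₁ : k^{(Γ₁)} → V_{n−1} and ψ₀ : k^{(Γ₀)} → V_n such that ψ₀ ∘ s_* equals (multiplication by x) ∘ ψ₁ and ψ₀ ∘ t_* equals (multiplication by y) ∘ ψ₁; that is, the linearization k^{(A_{n+1})} is isomorphic as a Kronecker representation to P(n) = (V_{n−1} ⇉ V_n; multiplication by x, multiplication by y). -/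
open MvPolynomial

noncomputable section
open MvPolynomial

variable (k : Type) [Field k]

private lemma deg2 (e : Fin 2 →₀ ℕ) : e.degree = e 0 + e 1 := by
  rw [Finsupp.degree_apply, Finset.sum_subset (Finset.subset_univ _)
    (by intro x _ hx; simpa using (Finsupp.notMem_support_iff.1 hx)), Fin.sum_univ_two]

/-- exponent of the i-th monomial `x^(n-i) y^i` -/
private def dd (n : ℕ) (i : Fin (n+1)) : Fin 2 →₀ ℕ :=
  Finsupp.single (0 : Fin 2) (n - (i : ℕ)) + Finsupp.single (1 : Fin 2) (i : ℕ)

private lemma dd0 (n : ℕ) (i : Fin (n+1)) : dd n i 0 = n - (i : ℕ) := by simp [dd]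
private lemma dd1 (n : ℕ) (i : Fin (n+1)) : dd n i 1 = (i : ℕ) := by simp [dd]

private lemma dd_inj (n : ℕ) : Function.Injective (dd n) := by
  intro i j h
  have := congrArg (fun f => f 1) h
  simp only [dd1] at this
  exact Fin.ext this

private lemma dd_degree (n : ℕ) (i : Fin (n+1)) : (dd n i).degree = n := by
  rw [deg2, dd0, dd1]
  omega

private lemma eq_dd (n : ℕ) (e : Fin 2 →₀ ℕ) (he : e.degree = n) :
    e = dd n ⟨e 1, by rw [deg2] at he; omega⟩ := by
  rw [deg2] at he
  ext j
  fin_cases j <;> simp [dd, Finsupp.single_apply] <;> omega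

private lemma mono_mem (n : ℕ) (i : Fin (n+1)) :
    (monomial (dd n i) (1 : k)) ∈ Vd k n := by
  rw [mem_homogeneousSubmodule]
  exact isHomogeneous_monomial _ (dd_degree n i)

/-- forward map -/
private def F (n : ℕ) : (Fin (n+1) →₀ k) →ₗ[k] Vd k n :=
  Finsupp.linearCombination k (fun i => ⟨monomial (dd n i) 1, mono_mem k n i⟩)

/-- backward map -/
private def G (n : ℕ) : Vd k n →ₗ[k] (Fin (n+1) →₀ k) where
  toFun p := Finsupp.equivFunOnFinite.symm (fun i => coeff (dd n i) p.1)
  map_add' a b := by ext i; simp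
  map_smul' c a := by ext i; simp

private lemma GF (n : ℕ) : (G k n).comp (F k n) = LinearMap.id := by
  apply Finsupp.lhom_ext
  intro i b
  ext j
  simp only [LinearMap.comp_apply, F, G, Finsupp.linearCombination_single,
    LinearMap.id_apply, LinearMap.coe_mk, AddHom.coe_mk]
  simp only [SetLike.val_smul, smul_eq_mul,
    Finsupp.coe_equivFunOnFinite_symm, coeff_smul, coeff_monomial]
  rw [Finsupp.single_apply]
  by_cases h : i = j
  · subst h; simp
  · rw [if_neg (fun hdd => h (dd_inj n hdd)), if_neg h]
    simp

private lemma FG (n : ℕ) : (F k n).comp (G k n) = LinearMap.id := by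
  ext p e
  have hp := p.2
  rw [mem_homogeneousSubmodule] at hp
  rw [LinearMap.comp_apply, LinearMap.id_apply]
  simp only [F, G, LinearMap.coe_mk, AddHom.coe_mk, Finsupp.linearCombination_apply]
  rw [Finsupp.sum_fintype _ _ (by intro i; simp)]
  rw [AddSubmonoid.coe_finset_sum]
  rw [MvPolynomial.coeff_sum]
  simp only [SetLike.val_smul, coeff_smul, coeff_monomial,
    Finsupp.coe_equivFunOnFinite_symm, smul_eq_mul, mul_ite, mul_one, mul_zero]
  by_cases he : e.degree = n
  · have hdef := eq_dd n e he
    rw [Finset.sum_eq_single (⟨e 1, by rw [deg2] at he; omega⟩ : Fin (n+1))]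
    · rw [if_pos hdef.symm, ← hdef]
    · intro j _ hj
      rw [if_neg]
      intro hdd
      exact hj (dd_inj n (hdd.trans hdef))
    · simp
  · rw [hp.coeff_eq_zero he]
    apply Finset.sum_eq_zero
    intro j _
    rw [if_neg]
    intro hdd
    exact he (hdd ▸ dd_degree n j)

private def E (n : ℕ) : (Fin (n+1) →₀ k) ≃ₗ[k] Vd k n :=
  LinearEquiv.ofLinear (F k n) (G k n) (FG k n) (GF k n)

private lemma E_single' (n : ℕ) (i : Fin (n+1)) (b : k) :
    ((E k n) (Finsupp.single i b) : Poly2 k) = monomial (dd n i) b := by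
  simp [E, F, Finsupp.linearCombination_single, smul_monomial]

private lemma dd_castSucc (m : ℕ) (i : Fin (m+1)) :
    Finsupp.single (0 : Fin 2) 1 + dd m i = dd (m+1) i.castSucc := by
  ext j
  fin_cases j <;> simp [dd, Finsupp.single_apply] <;> omega

private lemma dd_succ (m : ℕ) (i : Fin (m+1)) :
    Finsupp.single (1 : Fin 2) 1 + dd m i = dd (m+1) i.succ := by
  ext j
  fin_cases j <;> simp [dd, Finsupp.single_apply] <;> omega

end


noncomputable section
open MvPolynomial

/-- the linearization `k^{(A_{n+1})}` of the linear quiver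
`A_{n+1}` (vertices `Fin (n+1)`, arrows `Fin n`, arrow `i` from `i` to `i+1`,
so start map `Fin.castSucc` and terminus map `Fin.succ`) is isomorphic, as a
Kronecker representation, to `P(n) = (V_{n-1} ⇉ V_n; x·, y·)`.  The induced
maps `s_*, t_*` on the free vector spaces are `Finsupp.lmapDomain`. -/
theorem stmt7 (k : Type) [Field k] (n : ℕ) :
    ∃ (ψ₁ : (Fin n →₀ k) ≃ₗ[k] Vm k n) (ψ₀ : (Fin (n+1) →₀ k) ≃ₗ[k] Vd k n),
      (∀ c : Fin n →₀ k,
        ψ₀ (Finsupp.lmapDomain k k (Fin.castSucc : Fin n → Fin (n+1)) c)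
          = mulX k n (ψ₁ c)) ∧
      (∀ c : Fin n →₀ k,
        ψ₀ (Finsupp.lmapDomain k k (Fin.succ : Fin n → Fin (n+1)) c)
          = mulY k n (ψ₁ c)) := by
  cases n with
  | zero =>
      refine ⟨LinearEquiv.ofLinear 0 0
        (by apply LinearMap.ext; intro x; apply Subtype.ext;
            simpa using ((Submodule.mem_bot k).1 x.2).symm)
        (by apply Finsupp.lhom_ext; intro i; exact i.elim0), E k 0, ?_, ?_⟩ <;>
      · intro c
        have hc : c = 0 := by ext i; exact i.elim0
        subst hc
        simp
  | succ m =>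
      have h1 : (E k (m+1)).toLinearMap.comp
            (Finsupp.lmapDomain k k (Fin.castSucc : Fin (m+1) → Fin (m+2)))
          = (mulX k (m+1)).comp (E k m).toLinearMap := by
        apply Finsupp.lhom_ext
        intro i b
        apply Subtype.ext
        simp only [LinearMap.comp_apply, LinearEquiv.coe_coe, Finsupp.lmapDomain_apply, Finsupp.mapDomain_single]
        show ((E k (m+1)) (Finsupp.single i.castSucc b) : Poly2 k)
            = X 0 * ((E k m) (Finsupp.single i b) : Poly2 k)
        rw [E_single', E_single', X, monomial_mul, one_mul, dd_castSucc]
      have h2 : (E k (m+1)).toLinearMap.comp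
            (Finsupp.lmapDomain k k (Fin.succ : Fin (m+1) → Fin (m+2)))
          = (mulY k (m+1)).comp (E k m).toLinearMap := by
        apply Finsupp.lhom_ext
        intro i b
        apply Subtype.ext
        simp only [LinearMap.comp_apply, LinearEquiv.coe_coe, Finsupp.lmapDomain_apply, Finsupp.mapDomain_single]
        show ((E k (m+1)) (Finsupp.single i.succ b) : Poly2 k)
            = X 1 * ((E k m) (Finsupp.single i b) : Poly2 k)
        rw [E_single', E_single', X, monomial_mul, one_mul, dd_succ]
      exact ⟨E k m, E k (m+1), fun c => LinearMap.congr_fun h1 c,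
        fun c => LinearMap.congr_fun h2 c⟩

end
end

section
/- Let k be a field and n ≥ 0. Let A_{n+1} be the linear quiver with vertex set {1,…,n+1} and arrow set {1,…,n}, where arrow i has start i and terminus i+1. Let s^*, t^* : (Γ₀ → k) → (Γ₁ → k) be precomposition with s and t on the spaces of all k-valued functions. Then there exist k-linear isomorphisms ψ₁ : (Γ₀ → k) → V_n* and ψ₀ : (Γ₁ → k) → V_{n−1}* such that ψ₀ ∘ s^* = x^* ∘ ψ₁ and ψ₀ ∘ t^* = y^* ∘ ψ₁, where x^*, y^* : V_n* → V_{n−1}* are the duals of the multiplication maps V_{n−1} → V_n by x and by y; that is, k^{A_{n+1}} is isomorphic as a Kronecker representation to I(n) = (V_n* ⇉ V_{n−1}*; x^*, y^*). -/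
open MvPolynomial

noncomputable section
open MvPolynomial

namespace Stmt8Aux

variable (k : Type) [Field k]

/-- exponent vector x^(n-i) y^i -/
def dvec (n : ℕ) (i : Fin (n+1)) : Fin 2 →₀ ℕ :=
  Finsupp.single (0 : Fin 2) (n - (i:ℕ)) + Finsupp.single (1 : Fin 2) (i:ℕ)

lemma dvec_apply0 (n : ℕ) (i : Fin (n+1)) : dvec n i 0 = n - i := by
  simp [dvec, Finsupp.single_apply]

lemma dvec_apply1 (n : ℕ) (i : Fin (n+1)) : dvec n i 1 = i := by
  simp [dvec, Finsupp.single_apply]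

lemma deg2 (m : Fin 2 →₀ ℕ) : m.degree = m 0 + m 1 := by
  rw [Finsupp.degree_apply, Finset.sum_subset (Finset.subset_univ _)]
  · simp [Fin.sum_univ_two]
  · intro i _ h; simpa using Finsupp.notMem_support_iff.mp h

lemma dvec_degree (n : ℕ) (i : Fin (n+1)) : (dvec n i).degree = n := by
  rw [deg2, dvec_apply0, dvec_apply1]
  have := i.isLt; omega

lemma dvec_inj (n : ℕ) : Function.Injective (dvec n) := by
  intro i j h
  have : (dvec n i) 1 = (dvec n j) 1 := by rw [h]
  rw [dvec_apply1, dvec_apply1] at this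
  exact Fin.ext this

def fmon (n : ℕ) (i : Fin (n+1)) : Poly2 k := monomial (dvec n i) 1

lemma fmon_mem (n : ℕ) (i : Fin (n+1)) : fmon k n i ∈ Vd k n :=
  isHomogeneous_monomial 1 (dvec_degree n i)

lemma fmon_li (n : ℕ) : LinearIndependent k (fmon k n) := by
  have := (basisMonomials (Fin 2) k).linearIndependent.comp (dvec n) (dvec_inj n)
  exact this

lemma fmon_span (n : ℕ) : Submodule.span k (Set.range (fmon k n)) = Vd k n := by
  apply le_antisymm
  · rw [Submodule.span_le]
    rintro _ ⟨i, rfl⟩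
    exact fmon_mem k n i
  · intro p hp
    rw [mem_homogeneousSubmodule] at hp
    rw [p.as_sum]
    apply Submodule.sum_mem
    intro m hm
    have hne : coeff m p ≠ 0 := mem_support_iff.mp hm
    have hdeg : m.degree = n := by
      rw [Finsupp.degree_eq_weight_one]; exact hp hne
    have h1 : m 1 ≤ n := by rw [deg2] at hdeg; omega
    have hme : m = dvec n ⟨m 1, Nat.lt_succ_of_le h1⟩ := by
      ext j
      fin_cases j
      · show m 0 = dvec n ⟨m 1, Nat.lt_succ_of_le h1⟩ 0
        rw [dvec_apply0]; rw [deg2] at hdeg; simp; omega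
      · show m 1 = dvec n ⟨m 1, Nat.lt_succ_of_le h1⟩ 1
        rw [dvec_apply1]
    have : monomial m (coeff m p) = coeff m p • fmon k n ⟨m 1, Nat.lt_succ_of_le h1⟩ := by
      rw [fmon, smul_monomial, smul_eq_mul, mul_one, ← hme]
    rw [this]
    exact Submodule.smul_mem _ _ (Submodule.subset_span ⟨_, rfl⟩)

/-- the basis of `V_n` by monomials -/
def monBasis (n : ℕ) : Module.Basis (Fin (n+1)) k (Vd k n) :=
  (Module.Basis.span (fmon_li k n)).map (LinearEquiv.ofEq _ _ (fmon_span k n))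

lemma monBasis_apply (n : ℕ) (i : Fin (n+1)) :
    ((monBasis k n i : Vd k n) : Poly2 k) = fmon k n i := by
  rw [monBasis, Module.Basis.map_apply, LinearEquiv.coe_ofEq_apply]
  exact congrArg Subtype.val (Module.Basis.span_apply (fmon_li k n) i)

/-- the iso from coordinates to the dual space -/
def psi (n : ℕ) : (Fin (n+1) → k) ≃ₗ[k] Module.Dual k (Vd k n) :=
  (monBasis k n).dualBasis.equivFun.symm

lemma psi_apply (n : ℕ) (c : Fin (n+1) → k) (j : Fin (n+1)) :
    psi k n c (monBasis k n j) = c j := by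
  rw [psi, Module.Basis.equivFun_symm_apply]
  simp only [LinearMap.coe_sum, Finset.sum_apply, LinearMap.smul_apply,
    Module.Basis.dualBasis_apply_self, smul_eq_mul, mul_boole]
  simp


lemma mulVar_basis (m : ℕ) (j : Fin (m+1)) (v : Fin 2) (i : Fin (m+2))
    (h : Finsupp.single v 1 + dvec m j = dvec (m+1) i) :
    mulVar k (m+1) v (monBasis k m j) = monBasis k (m+1) i := by
  apply Subtype.ext
  show X v * ((monBasis k m j : Vd k m) : Poly2 k) = _
  rw [monBasis_apply, monBasis_apply, fmon, fmon,
    show (X v : Poly2 k) = monomial (Finsupp.single v 1) 1 from rfl,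
    monomial_mul, one_mul, h]

lemma mulX_basis (m : ℕ) (j : Fin (m+1)) :
    mulX k (m+1) (monBasis k m j) = monBasis k (m+1) (Fin.castSucc j) := by
  apply mulVar_basis
  ext l
  fin_cases l
  · show (Finsupp.single (0:Fin 2) 1) 0 + dvec m j 0 = dvec (m+1) (Fin.castSucc j) 0
    rw [dvec_apply0, dvec_apply0, Finsupp.single_apply, Fin.coe_castSucc, if_pos rfl]
    have := j.isLt; omega
  · show (Finsupp.single (0:Fin 2) 1) 1 + dvec m j 1 = dvec (m+1) (Fin.castSucc j) 1
    rw [dvec_apply1, dvec_apply1, Finsupp.single_apply, Fin.coe_castSucc,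
      if_neg (by decide)]
    omega

lemma mulY_basis (m : ℕ) (j : Fin (m+1)) :
    mulY k (m+1) (monBasis k m j) = monBasis k (m+1) j.succ := by
  apply mulVar_basis
  ext l
  fin_cases l
  · show (Finsupp.single (1:Fin 2) 1) 0 + dvec m j 0 = dvec (m+1) j.succ 0
    rw [dvec_apply0, dvec_apply0, Finsupp.single_apply, Fin.val_succ,
      if_neg (by decide)]
    have := j.isLt; omega
  · show (Finsupp.single (1:Fin 2) 1) 1 + dvec m j 1 = dvec (m+1) j.succ 1
    rw [dvec_apply1, dvec_apply1, Finsupp.single_apply, Fin.val_succ, if_pos rfl]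
    omega

end Stmt8Aux

/-- for the linear quiver `A_{n+1}` (vertices `Fin (n+1)`, arrows
`Fin n`, arrow `i` from `i` to `i+1`), the representation `k^{A_{n+1}}` given
by the precomposition maps `s^*, t^* : (Fin (n+1) → k) → (Fin n → k)` is
isomorphic, as a Kronecker representation, to
`I(n) = (V_n* ⇉ V_{n-1}*; x^*, y^*)`. -/
theorem stmt8 (k : Type) [Field k] (n : ℕ) :
    ∃ (ψ₁ : (Fin (n+1) → k) ≃ₗ[k] Module.Dual k (Vd k n))
      (ψ₀ : (Fin n → k) ≃ₗ[k] Module.Dual k (Vm k n)),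
      (∀ c : Fin (n+1) → k,
        ψ₀ (LinearMap.funLeft k k (Fin.castSucc : Fin n → Fin (n+1)) c)
          = (mulX k n).dualMap (ψ₁ c)) ∧
      (∀ c : Fin (n+1) → k,
        ψ₀ (LinearMap.funLeft k k (Fin.succ : Fin n → Fin (n+1)) c)
          = (mulY k n).dualMap (ψ₁ c)) := by
  open Stmt8Aux in
  cases n with
  | zero =>
      haveI : Subsingleton (Module.Dual k (Vm k 0)) :=
        ⟨fun f g => by ext x; rw [Subsingleton.elim x 0]; simp⟩
      exact ⟨psi k 0, LinearEquiv.ofSubsingleton _ _,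
        fun c => Subsingleton.elim _ _, fun c => Subsingleton.elim _ _⟩
  | succ m =>
      refine ⟨psi k (m+1), psi k m, fun c => ?_, fun c => ?_⟩
      · apply (monBasis k m).ext
        intro j
        rw [LinearMap.dualMap_apply, psi_apply, LinearMap.funLeft_apply]
        rw [show mulX k (m+1) (monBasis k m j) = monBasis k (m+1) (Fin.castSucc j) from
          mulX_basis k m j, psi_apply]
      · apply (monBasis k m).ext
        intro j
        rw [LinearMap.dualMap_apply, psi_apply, LinearMap.funLeft_apply]
        rw [show mulY k (m+1) (monBasis k m j) = monBasis k (m+1) j.succ from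
          mulY_basis k m j, psi_apply]


end
end

section
/- Let k be a field, let a, b ≥ 1, and let f ∈ V_a and g ∈ V_b be nonzero homogeneous polynomials that are coprime (they have no common irreducible factor in k[x,y]). Then R(f·g) is isomorphic as a Kronecker representation to the direct sum R(f) ⊕ R(g); that is, there exist k-linear isomorphisms V_{a+b−1} ≅ V_{a−1} × V_{b−1} and V_{a+b}/⟨fg⟩ ≅ (V_a/⟨f⟩) × (V_b/⟨g⟩) intertwining the maps induced by multiplication by x and the maps induced by multiplication by y. -/
open MvPolynomial

noncomputable section
open MvPolynomial

/-- The vertex space of `|R(f)|`: the quotient `V_n/⟨f⟩` by the line spanned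
by `f`. -/
abbrev RV (k : Type) [Field k] (n : ℕ) (f : Vd k n) : Type :=
  (Vd k n) ⧸ (k ∙ f)

/-- The map `V_{n-1} → V_n/⟨f⟩`, `g ↦ x·g + ⟨f⟩`. -/
def Ru (k : Type) [Field k] (n : ℕ) (f : Vd k n) : Vm k n →ₗ[k] RV k n f :=
  (Submodule.mkQ (k ∙ f)) ∘ₗ mulX k n

/-- The map `V_{n-1} → V_n/⟨f⟩`, `g ↦ y·g + ⟨f⟩`. -/
def Rv (k : Type) [Field k] (n : ℕ) (f : Vd k n) : Vm k n →ₗ[k] RV k n f :=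
  (Submodule.mkQ (k ∙ f)) ∘ₗ mulY k n

/-- The quiver `|R(f)|`: vertices `V_n/⟨f⟩`, arrows `V_{n-1}`, start
`g ↦ x·g + ⟨f⟩`, terminus `g ↦ y·g + ⟨f⟩`. -/
abbrev RQuiv (k : Type) [Field k] (n : ℕ) (f : Vd k n) : Quiv where
  V := RV k n f
  A := Vm k n
  s := Ru k n f
  t := Rv k n f

end

noncomputable section
open MvPolynomial

/-- The product `f·g ∈ V_{a+b}` of `f ∈ V_a` and `g ∈ V_b`. -/
def mulVd (k : Type) [Field k] {a b : ℕ} (f : Vd k a) (g : Vd k b) : Vd k (a + b) :=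
  ⟨(f : Poly2 k) * (g : Poly2 k), by
    rw [mem_homogeneousSubmodule]
    exact ((mem_homogeneousSubmodule a (f : Poly2 k)).1 f.2).mul
      ((mem_homogeneousSubmodule b (g : Poly2 k)).1 g.2)⟩


section Aux
open MvPolynomial

lemma degree_fin2 (d : Fin 2 →₀ ℕ) : d.degree = d 0 + d 1 := by
  rw [Finsupp.degree_apply, Finset.sum_subset (Finset.subset_univ _)
    (fun x _ hx => Finsupp.notMem_support_iff.1 hx), Fin.sum_univ_two]

noncomputable def degEquiv (n : ℕ) : {d : Fin 2 →₀ ℕ // d.degree = n} ≃ Fin (n+1) where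
  toFun d := ⟨d.1 0, by have h := d.2; rw [degree_fin2] at h; omega⟩
  invFun i := ⟨Finsupp.single 0 (i : ℕ) + Finsupp.single 1 (n - (i : ℕ)), by
    rw [degree_fin2]; simp [Finsupp.single_apply]
    omega⟩
  left_inv d := by
    have h := d.2; rw [degree_fin2] at h
    set_option linter.unnecessarySeqFocus false in
    apply Subtype.ext; ext x
    fin_cases x <;> simp [Finsupp.single_apply] <;> omega
  right_inv i := by
    apply Fin.ext; simp [Finsupp.single_apply]

noncomputable def VdBasis (k : Type) [Field k] (n : ℕ) : Module.Basis (Fin (n+1)) k (Vd k n) :=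
  ((basisRestrictSupport k {d : Fin 2 →₀ ℕ | d.degree = n}).map
    (LinearEquiv.ofEq _ _ (homogeneousSubmodule_eq_finsupp_supported (Fin 2) k n).symm)).reindex
    (degEquiv n)

instance (k : Type) [Field k] (n : ℕ) : FiniteDimensional k (Vd k n) :=
  Module.Finite.of_basis (VdBasis k n)

lemma finrank_Vd (k : Type) [Field k] (n : ℕ) : Module.finrank k (Vd k n) = n + 1 := by
  rw [Module.finrank_eq_card_basis (VdBasis k n), Fintype.card_fin]

lemma finrank_RV (k : Type) [Field k] (n : ℕ) (f : Vd k n) (hf : f ≠ 0) :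
    Module.finrank k (RV k n f) = n := by
  have h1 := Submodule.finrank_quotient_add_finrank (k ∙ f)
  rw [finrank_span_singleton hf, finrank_Vd] at h1
  exact Nat.add_right_cancel h1

lemma hom_dvd {k : Type} [Field k] {m e : ℕ} {f p : Poly2 k} (hf : f.IsHomogeneous m)
    (hp : p.IsHomogeneous e) (hdvd : f ∣ p) :
    (e < m → p = 0) ∧ (e = m → ∃ r : k, p = C r * f) := by
  obtain ⟨c, rfl⟩ := hdvd
  have h2 : homogeneousComponent e (f * c) = f * c := by
    rw [homogeneousComponent_of_mem hp, if_pos rfl]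
  have h4 : f * c = ∑ i ∈ Finset.range (c.totalDegree + 1),
      if e = m + i then f * homogeneousComponent i c else 0 := by
    conv_lhs => rw [← h2]
    conv_lhs => rw [show f * c = ∑ i ∈ Finset.range (c.totalDegree + 1),
        f * homogeneousComponent i c by rw [← Finset.mul_sum, sum_homogeneousComponent]]
    rw [map_sum]
    exact Finset.sum_congr rfl fun i _ =>
      homogeneousComponent_of_mem (hf.mul (homogeneousComponent_isHomogeneous i c))
  constructor
  · intro h
    rw [h4]
    exact Finset.sum_eq_zero fun i _ => if_neg (by omega)
  · intro h
    subst h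
    refine ⟨coeff 0 c, ?_⟩
    rw [h4, Finset.sum_eq_single_of_mem 0 (Finset.mem_range.2 (by omega))
      (fun i _ hi => if_neg (by omega)), if_pos (by omega), homogeneousComponent_zero,
      mul_comm]

variable {k : Type} [Field k] {A B : ℕ}

/-- The map `(p, q) ↦ p·g + f·q` from `V_A × V_B` to `V_{A+1+B}`. -/
noncomputable def Phi1 (f : Vd k (A+1)) (g : Vd k (B+1)) :
    (Vd k A × Vd k B) →ₗ[k] Vd k (A+1+B) where
  toFun pq := ⟨(pq.1 : Poly2 k) * (g : Poly2 k) + (f : Poly2 k) * (pq.2 : Poly2 k), by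
    have h1 : ((pq.1 : Poly2 k) * (g : Poly2 k)).IsHomogeneous (A + (B+1)) :=
      ((mem_homogeneousSubmodule _ _).1 pq.1.2).mul ((mem_homogeneousSubmodule _ _).1 g.2)
    have h2 : ((f : Poly2 k) * (pq.2 : Poly2 k)).IsHomogeneous ((A+1) + B) :=
      ((mem_homogeneousSubmodule _ _).1 f.2).mul ((mem_homogeneousSubmodule _ _).1 pq.2.2)
    have e1 : A + (B+1) = A + 1 + B := by omega
    rw [e1] at h1
    exact (Vd k (A+1+B)).add_mem h1 h2⟩
  map_add' x y := by
    apply Subtype.ext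
    simp only [Prod.fst_add, Prod.snd_add, Submodule.coe_add]
    ring
  map_smul' c x := by
    apply Subtype.ext
    simp only [Prod.smul_fst, Prod.smul_snd, Submodule.coe_smul, RingHom.id_apply]
    rw [smul_add, smul_mul_assoc, mul_smul_comm]

/-- Multiplication by `g`, as a map `V_{A+1} → V_{A+1+(B+1)}`. -/
noncomputable def mulg (g : Vd k (B+1)) : Vd k (A+1) →ₗ[k] Vd k (A+1+(B+1)) where
  toFun P := ⟨(P : Poly2 k) * (g : Poly2 k),
    ((mem_homogeneousSubmodule _ _).1 P.2).mul ((mem_homogeneousSubmodule _ _).1 g.2)⟩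
  map_add' x y := by
    apply Subtype.ext
    simp only [Submodule.coe_add]
    ring
  map_smul' c x := by
    apply Subtype.ext
    simp only [Submodule.coe_smul, RingHom.id_apply]
    rw [smul_mul_assoc]

/-- Multiplication by `f`, as a map `V_{B+1} → V_{A+1+(B+1)}`. -/
noncomputable def mulf (f : Vd k (A+1)) : Vd k (B+1) →ₗ[k] Vd k (A+1+(B+1)) where
  toFun Q := ⟨(f : Poly2 k) * (Q : Poly2 k),
    ((mem_homogeneousSubmodule _ _).1 f.2).mul ((mem_homogeneousSubmodule _ _).1 Q.2)⟩
  map_add' x y := by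
    apply Subtype.ext
    simp only [Submodule.coe_add]
    ring
  map_smul' c x := by
    apply Subtype.ext
    simp only [Submodule.coe_smul, RingHom.id_apply]
    rw [mul_smul_comm]

lemma mulg_f_mem (f : Vd k (A+1)) (g : Vd k (B+1)) :
    mulg g f ∈ (k ∙ mulVd k f g) := by
  have : mulg g f = mulVd k f g := Subtype.ext rfl
  rw [this]
  exact Submodule.mem_span_singleton_self _

lemma mulf_g_mem (f : Vd k (A+1)) (g : Vd k (B+1)) :
    mulf f g ∈ (k ∙ mulVd k f g) := by
  have : mulf f g = mulVd k f g := Subtype.ext rfl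
  rw [this]
  exact Submodule.mem_span_singleton_self _

/-- The map `(P+⟨f⟩, Q+⟨g⟩) ↦ P·g + f·Q + ⟨fg⟩`. -/
noncomputable def Phi0 (f : Vd k (A+1)) (g : Vd k (B+1)) :
    (RV k (A+1) f × RV k (B+1) g) →ₗ[k] RV k (A+1+(B+1)) (mulVd k f g) :=
  LinearMap.coprod
    (Submodule.liftQ (k ∙ f) ((Submodule.mkQ (k ∙ mulVd k f g)) ∘ₗ mulg g)
      (by
        rw [Submodule.span_singleton_le_iff_mem, LinearMap.mem_ker, LinearMap.comp_apply,
          Submodule.mkQ_apply, Submodule.Quotient.mk_eq_zero]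
        exact mulg_f_mem f g))
    (Submodule.liftQ (k ∙ g) ((Submodule.mkQ (k ∙ mulVd k f g)) ∘ₗ mulf f)
      (by
        rw [Submodule.span_singleton_le_iff_mem, LinearMap.mem_ker, LinearMap.comp_apply,
          Submodule.mkQ_apply, Submodule.Quotient.mk_eq_zero]
        exact mulf_g_mem f g))

lemma Phi0_mk (f : Vd k (A+1)) (g : Vd k (B+1)) (P : Vd k (A+1)) (Q : Vd k (B+1)) :
    Phi0 f g (Submodule.Quotient.mk P, Submodule.Quotient.mk Q)
      = Submodule.Quotient.mk (mulg g P + mulf f Q) := by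
  simp only [Phi0, LinearMap.coprod_apply, Submodule.liftQ_apply, LinearMap.comp_apply,
    Submodule.mkQ_apply, ← Submodule.Quotient.mk_add]

/-- Compatibility of `Phi0`, `Phi1` with multiplication by a variable. -/
lemma Phi_comm (f : Vd k (A+1)) (g : Vd k (B+1)) (j : Fin 2) (pq : Vd k A × Vd k B) :
    Phi0 f g ((Submodule.mkQ (k ∙ f)) (mulVar k (A+1) j pq.1),
        (Submodule.mkQ (k ∙ g)) (mulVar k (B+1) j pq.2))
      = (Submodule.mkQ (k ∙ mulVd k f g))
          (mulVar k (A+1+(B+1)) j (Phi1 f g pq)) := by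
  simp only [Submodule.mkQ_apply]
  rw [Phi0_mk]
  congr 1
  apply Subtype.ext
  show (X j * (pq.1 : Poly2 k)) * (g : Poly2 k)
      + (f : Poly2 k) * (X j * (pq.2 : Poly2 k))
    = X j * ((pq.1 : Poly2 k) * (g : Poly2 k) + (f : Poly2 k) * (pq.2 : Poly2 k))
  ring

end Aux

set_option maxHeartbeats 2000000 in
set_option synthInstance.maxHeartbeats 400000 in
/-- for coprime nonzero `f ∈ V_a`, `g ∈ V_b` (no common
irreducible factor), `R(f·g)` is isomorphic as a Kronecker representation to
`R(f) ⊕ R(g)`. -/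
theorem stmt11 (k : Type) [Field k] (a b : ℕ) (ha : 1 ≤ a) (hb : 1 ≤ b)
    (f : Vd k a) (g : Vd k b) (hf : f ≠ 0) (hg : g ≠ 0)
    (hcop : ∀ q : Poly2 k, Irreducible q →
      ¬ (q ∣ (f : Poly2 k) ∧ q ∣ (g : Poly2 k))) :
    ∃ (ψ₁ : Vm k (a + b) ≃ₗ[k] (Vm k a × Vm k b))
      (ψ₀ : RV k (a + b) (mulVd k f g) ≃ₗ[k] (RV k a f × RV k b g)),
      (∀ h : Vm k (a + b),
        ψ₀ (Ru k (a + b) (mulVd k f g) h)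
          = (Ru k a f (ψ₁ h).1, Ru k b g (ψ₁ h).2)) ∧
      (∀ h : Vm k (a + b),
        ψ₀ (Rv k (a + b) (mulVd k f g) h)
          = (Rv k a f (ψ₁ h).1, Rv k b g (ψ₁ h).2)) := by
  obtain ⟨A, rfl⟩ : ∃ A, a = A + 1 := ⟨a - 1, by omega⟩
  obtain ⟨B, rfl⟩ : ∃ B, b = B + 1 := ⟨b - 1, by omega⟩
  clear ha hb
  have hf0 : (f : Poly2 k) ≠ 0 := fun h => hf (Subtype.ext h)
  have hg0 : (g : Poly2 k) ≠ 0 := fun h => hg (Subtype.ext h)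
  have hfh : (f : Poly2 k).IsHomogeneous (A+1) := (mem_homogeneousSubmodule _ _).1 f.2
  have hgh : (g : Poly2 k).IsHomogeneous (B+1) := (mem_homogeneousSubmodule _ _).1 g.2
  have hfg0 : mulVd k f g ≠ 0 := by
    intro h
    exact mul_ne_zero hf0 hg0 (congrArg Subtype.val h)
  have hrel : IsRelPrime (f : Poly2 k) (g : Poly2 k) := by
    intro d hdf hdg
    by_contra hu
    have hd0 : d ≠ 0 := by rintro rfl; exact hf0 (zero_dvd_iff.1 hdf)
    obtain ⟨q, hqirr, hqd⟩ := WfDvdMonoid.exists_irreducible_factor hu hd0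
    exact hcop q hqirr ⟨hqd.trans hdf, hqd.trans hdg⟩
  -- Phi1 is bijective
  have hinj1 : Function.Injective (Phi1 f g) := by
    rw [injective_iff_map_eq_zero]
    intro pq hpq
    have hval : (pq.1 : Poly2 k) * (g : Poly2 k) + (f : Poly2 k) * (pq.2 : Poly2 k) = 0 :=
      congrArg Subtype.val hpq
    have hdvd : (f : Poly2 k) ∣ (g : Poly2 k) * (pq.1 : Poly2 k) :=
      ⟨-(pq.2 : Poly2 k), by linear_combination hval⟩
    have hp : (f : Poly2 k) ∣ (pq.1 : Poly2 k) := hrel.dvd_of_dvd_mul_left hdvd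
    have hp0 : (pq.1 : Poly2 k) = 0 :=
      (hom_dvd hfh ((mem_homogeneousSubmodule _ _).1 pq.1.2) hp).1 (by omega)
    have hq0 : (pq.2 : Poly2 k) = 0 := by
      have h5 : (f : Poly2 k) * (pq.2 : Poly2 k) = 0 := by
        rw [hp0] at hval; simpa using hval
      rcases mul_eq_zero.1 h5 with h | h
      · exact absurd h hf0
      · exact h
    rw [Prod.ext_iff]
    exact ⟨Subtype.ext hp0, Subtype.ext hq0⟩
  have hbij1 : Function.Bijective (Phi1 f g) := by
    refine ⟨hinj1, ?_⟩
    have hdim : Module.finrank k (Vd k A × Vd k B) = Module.finrank k (Vd k (A+1+B)) := by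
      rw [Module.finrank_prod, finrank_Vd, finrank_Vd, finrank_Vd]
      omega
    exact (LinearMap.injective_iff_surjective_of_finrank_eq_finrank hdim).1 hinj1
  -- Phi0 is bijective
  have hinj0 : Function.Injective (Phi0 f g) := by
    rw [injective_iff_map_eq_zero]
    intro PQ hPQ
    obtain ⟨P, hP⟩ := Submodule.Quotient.mk_surjective _ PQ.1
    obtain ⟨Q, hQ⟩ := Submodule.Quotient.mk_surjective _ PQ.2
    have hPQ' : PQ = (Submodule.Quotient.mk P, Submodule.Quotient.mk Q) :=
      Prod.ext hP.symm hQ.symm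
    rw [hPQ'] at hPQ ⊢
    rw [Phi0_mk, Submodule.Quotient.mk_eq_zero, Submodule.mem_span_singleton] at hPQ
    obtain ⟨c, hc⟩ := hPQ
    have hval : (P : Poly2 k) * (g : Poly2 k) + (f : Poly2 k) * (Q : Poly2 k)
        = C c * ((f : Poly2 k) * (g : Poly2 k)) := by
      have := congrArg Subtype.val hc
      simp only [Submodule.coe_add, SetLike.val_smul] at this
      rw [smul_eq_C_mul] at this
      exact this.symm
    have hdvd : (f : Poly2 k) ∣ (g : Poly2 k) * (P : Poly2 k) :=
      ⟨C c * (g : Poly2 k) - (Q : Poly2 k), by linear_combination hval⟩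
    have hp : (f : Poly2 k) ∣ (P : Poly2 k) := hrel.dvd_of_dvd_mul_left hdvd
    obtain ⟨r, hr⟩ :=
      (hom_dvd hfh ((mem_homogeneousSubmodule _ _).1 P.2) hp).2 rfl
    have hQval : (Q : Poly2 k) = (C c - C r) * (g : Poly2 k) := by
      apply mul_left_cancel₀ hf0
      linear_combination hval - (g : Poly2 k) * hr
    rw [Prod.mk_eq_zero]
    constructor
    · rw [Submodule.Quotient.mk_eq_zero, Submodule.mem_span_singleton]
      exact ⟨r, Subtype.ext (by rw [SetLike.val_smul, smul_eq_C_mul]; exact hr.symm)⟩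
    · rw [Submodule.Quotient.mk_eq_zero, Submodule.mem_span_singleton]
      exact ⟨c - r, Subtype.ext (by
        rw [SetLike.val_smul, smul_eq_C_mul, hQval, map_sub])⟩
  have hbij0 : Function.Bijective (Phi0 f g) := by
    refine ⟨hinj0, ?_⟩
    have hdim : Module.finrank k (RV k (A+1) f × RV k (B+1) g)
        = Module.finrank k (RV k (A+1+(B+1)) (mulVd k f g)) := by
      rw [Module.finrank_prod, finrank_RV k _ f hf, finrank_RV k _ g hg,
        finrank_RV k _ _ hfg0]
    exact (LinearMap.injective_iff_surjective_of_finrank_eq_finrank hdim).1 hinj0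
  have hPh : ∀ h, Phi1 f g ((LinearEquiv.ofBijective (Phi1 f g) hbij1).symm h) = h := by
    intro h
    rw [← LinearEquiv.ofBijective_apply (Phi1 f g) (hf := hbij1),
      LinearEquiv.apply_symm_apply]
  refine ⟨(LinearEquiv.ofBijective _ hbij1).symm, (LinearEquiv.ofBijective _ hbij0).symm,
    ?_, ?_⟩
  · intro h
    rw [LinearEquiv.symm_apply_eq, LinearEquiv.ofBijective_apply]
    simp only [Ru, mulX, LinearMap.comp_apply]
    have e := Phi_comm f g 0 ((LinearEquiv.ofBijective _ hbij1).symm h)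
    rw [hPh] at e
    exact e.symm
  · intro h
    rw [LinearEquiv.symm_apply_eq, LinearEquiv.ofBijective_apply]
    simp only [Rv, mulY, LinearMap.comp_apply]
    have e := Phi_comm f g 1 ((LinearEquiv.ofBijective _ hbij1).symm h)
    rw [hPh] at e
    exact e.symm


end
end

section
/- Let k be a field, let p be an irreducible homogeneous polynomial in x, y over k, let d ≥ 1 and set f = p^d ∈ V_n. Suppose the map u : V_{n−1} → V_n/⟨f⟩, g ↦ x·g + ⟨f⟩, is bijective and the map v : V_{n−1} → V_n/⟨f⟩, g ↦ y·g + ⟨f⟩, is not bijective. Then the endomorphism v ∘ u^{−1} of V_n/⟨f⟩ is nilpotent of index exactly d, i.e. (v ∘ u^{−1})^d = 0 and (v ∘ u^{−1})^{d−1} ≠ 0. -/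
open MvPolynomial

noncomputable section AuxStmt13
open MvPolynomial

variable {k : Type} [Field k]

lemma aux_prime_X1 : Prime (X 1 : Poly2 k) := by
  have h0 : Prime (X 0 : MvPolynomial (Fin 2) k) := by
    rw [← MulEquiv.prime_iff (MvPolynomial.finSuccEquiv k 1).toMulEquiv]
    have hX : (MvPolynomial.finSuccEquiv k 1).toMulEquiv (X 0) = Polynomial.X :=
      MvPolynomial.finSuccEquiv_X_zero
    rw [hX]
    exact Polynomial.prime_X
  rw [← MulEquiv.prime_iff (renameEquiv k (Equiv.swap (0 : Fin 2) 1)).toMulEquiv]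
  have hsw : (renameEquiv k (Equiv.swap (0 : Fin 2) 1)).toMulEquiv (X 1) = X 0 := by
    show (renameEquiv k (Equiv.swap (0 : Fin 2) 1)) (X 1) = X 0
    simp [Equiv.swap_apply_right]
  rw [hsw]
  exact h0

lemma aux_not_X1_dvd_X0 : ¬ (X 1 : Poly2 k) ∣ X 0 := by
  rw [MvPolynomial.X_dvd_X]
  decide

lemma aux_findim (N : ℕ) : FiniteDimensional k (Vd k N) := by
  apply Submodule.finiteDimensional_of_le
    (S₂ := MvPolynomial.restrictTotalDegree (Fin 2) k N)
  intro q hq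
  rw [MvPolynomial.mem_restrictTotalDegree]
  exact MvPolynomial.IsHomogeneous.totalDegree_le hq

lemma aux_deg_single (a : Fin 2) (b : ℕ) : (Finsupp.single a b).degree = b := by
  rcases eq_or_ne b 0 with rfl | hb
  · simp [Finsupp.degree]
  · exact Finsupp.degree_single a b

lemma aux_deg_add (u v : Fin 2 →₀ ℕ) : (u + v).degree = u.degree + v.degree := by
  simp only [Finsupp.degree_eq_weight_one]
  exact map_add _ u v

/-- A homogeneous polynomial of degree `N` divisible by `y^N` is a constant times `y^N`. -/
lemma aux_const_form {N : ℕ} {r : Poly2 k} (hr : r.IsHomogeneous N)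
    (hdvd : (X 1 : Poly2 k) ^ N ∣ r) : ∃ c : k, r = C c * X 1 ^ N := by
  obtain ⟨q, hq⟩ := hdvd
  refine ⟨constantCoeff q, ?_⟩
  have hqC : q = C (constantCoeff q) := by
    apply MvPolynomial.ext
    intro μ
    rcases eq_or_ne μ 0 with rfl | hμ
    · simp [constantCoeff_eq]
    · rw [coeff_C, if_neg (fun h => hμ h.symm)]
      by_contra hc
      have hcoeff : coeff (Finsupp.single 1 N + μ) r = coeff μ q := by
        rw [hq, X_pow_eq_monomial, coeff_monomial_mul, one_mul]
      have hdeg : (Finsupp.single 1 N + μ).degree = N := by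
        by_contra hne
        rw [hr.coeff_eq_zero hne] at hcoeff
        exact hc hcoeff.symm
      rw [aux_deg_add, aux_deg_single] at hdeg
      have : μ.degree = 0 := by omega
      exact hμ ((Finsupp.degree_eq_zero_iff μ).mp this)
  calc r = X 1 ^ N * q := hq
    _ = X 1 ^ N * C (constantCoeff q) := by rw [← hqC]
    _ = C (constantCoeff q) * X 1 ^ N := mul_comm _ _

lemma aux_pel_mem {a b N : ℕ} (h : a + b = N) :
    (X 0 : Poly2 k) ^ a * X 1 ^ b ∈ Vd k N := by
  rw [mem_homogeneousSubmodule, ← h]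
  exact (isHomogeneous_X_pow 0 a).mul (isHomogeneous_X_pow 1 b)

end AuxStmt13

set_option maxHeartbeats 1600000 in
set_option synthInstance.maxHeartbeats 400000 in
/-- for `f = p^d` with `p` irreducible homogeneous, if
`u : g ↦ x·g + ⟨f⟩` is bijective and `v : g ↦ y·g + ⟨f⟩` is not, then the
endomorphism `v ∘ u⁻¹` of `V_n/⟨f⟩` is nilpotent of index exactly `d`. -/
theorem stmt13 (k : Type) [Field k]
    (p : Poly2 k) (hp_irr : Irreducible p) (e : ℕ) (hp_hom : p.IsHomogeneous e)
    (d : ℕ) (hd : 1 ≤ d) (n : ℕ) (f : Vd k n) (hf : (f : Poly2 k) = p ^ d)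
    (hu : Function.Bijective (Ru k n f))
    (hv : ¬ Function.Bijective (Rv k n f)) :
    ((Rv k n f) ∘ₗ ((LinearEquiv.ofBijective (Ru k n f) hu).symm :
        RV k n f →ₗ[k] Vm k n)) ^ d = 0 ∧
    ((Rv k n f) ∘ₗ ((LinearEquiv.ofBijective (Ru k n f) hu).symm :
        RV k n f →ₗ[k] Vm k n)) ^ (d - 1) ≠ 0 := by
  classical
  haveI fdVd : FiniteDimensional k (Vd k n) := aux_findim n
  haveI fdVm : FiniteDimensional k (Vm k n) := by
    cases n with
    | zero => infer_instance
    | succ m => exact aux_findim m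
  haveI fdRV : FiniteDimensional k (RV k n f) := by infer_instance
  have hfne : (f : Poly2 k) ≠ 0 := by rw [hf]; exact pow_ne_zero _ hp_irr.ne_zero
  -- v is not injective
  have hni : ¬ Function.Injective (Rv k n f) := fun hinj => hv ⟨hinj,
    (LinearMap.injective_iff_surjective_of_finrank_eq_finrank
      (LinearEquiv.finrank_eq (LinearEquiv.ofBijective (Ru k n f) hu))).mp hinj⟩
  have hker : LinearMap.ker (Rv k n f) ≠ ⊥ := fun h => hni (LinearMap.ker_eq_bot.mp h)
  obtain ⟨g, hgker, hg0⟩ := (Submodule.ne_bot_iff _).mp hker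
  have hgv : Rv k n f g = 0 := LinearMap.mem_ker.mp hgker
  -- extract divisibility of f by X 1
  have h1 : mulY k n g ∈ (k ∙ f) := by
    have h2 : Submodule.mkQ (k ∙ f) (mulY k n g) = 0 := hgv
    rwa [Submodule.mkQ_apply, Submodule.Quotient.mk_eq_zero] at h2
  obtain ⟨a, ha⟩ := Submodule.mem_span_singleton.mp h1
  have hapoly : a • (f : Poly2 k) = X 1 * (g : Poly2 k) := by
    have h2 := congrArg Subtype.val ha
    simpa [mulY, mulVar] using h2
  have ha0 : a ≠ 0 := by
    rintro rfl
    apply hg0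
    have h3 : (X 1 : Poly2 k) * (g : Poly2 k) = 0 := by simpa using hapoly.symm
    rcases mul_eq_zero.mp h3 with h | h
    · exact absurd h (MvPolynomial.X_ne_zero 1)
    · exact Subtype.ext h
  have hdvd1 : (X 1 : Poly2 k) ∣ p ^ d := by
    have h2 : C a * (f : Poly2 k) = X 1 * (g : Poly2 k) := by
      rw [← MvPolynomial.smul_eq_C_mul]; exact hapoly
    have hf1 : (f : Poly2 k) = X 1 * (C a⁻¹ * (g : Poly2 k)) := by
      calc (f : Poly2 k) = C a⁻¹ * (C a * (f : Poly2 k)) := by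
            rw [← mul_assoc, ← C_mul, inv_mul_cancel₀ ha0, C_1, one_mul]
        _ = X 1 * (C a⁻¹ * (g : Poly2 k)) := by rw [h2]; ring
    exact hf ▸ ⟨_, hf1⟩
  have hdvdp : (X 1 : Poly2 k) ∣ p := aux_prime_X1.dvd_of_dvd_pow hdvd1
  obtain ⟨t, ht⟩ := hdvdp
  have htu : IsUnit t := (hp_irr.isUnit_or_isUnit ht).resolve_left aux_prime_X1.not_unit
  have hct : constantCoeff t ≠ 0 := (htu.map constantCoeff).ne_zero
  have hcoeffp : coeff (Finsupp.single 1 1) p ≠ 0 := by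
    rw [ht]
    have h2 : coeff (Finsupp.single (1 : Fin 2) 1) (X 1 * t) = coeff 0 t := by
      simpa using MvPolynomial.coeff_X_mul 0 1 t
    rw [h2]
    exact hct
  have he1 : e = 1 := by
    by_contra hne
    apply hcoeffp
    apply hp_hom.coeff_eq_zero
    rw [aux_deg_single]
    exact fun h => hne h.symm
  have hnd : n = d := by
    have h1' : ((f : Poly2 k)).IsHomogeneous n := f.2
    have h2' : ((f : Poly2 k)).IsHomogeneous (e * d) := by rw [hf]; exact hp_hom.pow d
    have h3' := h1'.inj_right h2' hfne
    rwa [he1, one_mul] at h3'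
  subst hnd
  obtain ⟨m, rfl⟩ : ∃ m, n = m + 1 := ⟨n - 1, (Nat.succ_pred_eq_of_pos hd).symm⟩
  set A := ((Rv k (m+1) f) ∘ₗ ((LinearEquiv.ofBijective (Ru k (m+1) f) hu).symm :
      RV k (m+1) f →ₗ[k] Vm k (m+1))) with hA
  have hXdvdf : (X 1 : Poly2 k) ^ (m+1) ∣ (f : Poly2 k) := by
    rw [hf]; exact pow_dvd_pow_of_dvd ⟨t, ht⟩ (m+1)
  -- A ∘ u = v
  have hAu : ∀ gg : Vm k (m+1), A (Ru k (m+1) f gg) = Rv k (m+1) f gg := by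
    intro gg
    have h1' : ((LinearEquiv.ofBijective (Ru k (m+1) f) hu).symm) (Ru k (m+1) f gg) = gg :=
      LinearEquiv.ofBijective_symm_apply_apply (f := Ru k (m+1) f) (h := hu) gg
    simp only [hA, LinearMap.comp_apply, LinearEquiv.coe_coe, h1']
  -- one step of the nilpotency argument
  have hstep : ∀ j, j ≤ m → ∀ h : Vd k (m+1), (X 1 : Poly2 k)^j ∣ (h : Poly2 k) →
      ∃ h' : Vd k (m+1), (X 1 : Poly2 k)^(j+1) ∣ (h' : Poly2 k) ∧
        A (Submodule.mkQ (k ∙ f) h) = Submodule.mkQ (k ∙ f) h' := by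
    intro j hj h hdvd
    set gg := (LinearEquiv.ofBijective (Ru k (m+1) f) hu).symm (Submodule.mkQ (k ∙ f) h) with hgg
    have hug : Ru k (m+1) f gg = Submodule.mkQ (k ∙ f) h := by
      rw [hgg]
      exact LinearEquiv.apply_ofBijective_symm_apply (f := Ru k (m+1) f) (h := hu) _
    have hAh : A (Submodule.mkQ (k ∙ f) h) = Rv k (m+1) f gg := by
      simp only [hA, LinearMap.comp_apply, LinearEquiv.coe_coe, ← hgg]
    have hmem : mulX k (m+1) gg - h ∈ (k ∙ f) := by
      have h2 : Submodule.mkQ (k ∙ f) (mulX k (m+1) gg - h) = 0 := by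
        rw [map_sub, show Submodule.mkQ (k ∙ f) (mulX k (m+1) gg)
          = Ru k (m+1) f gg from rfl, hug, sub_self]
      rwa [Submodule.mkQ_apply, Submodule.Quotient.mk_eq_zero] at h2
    obtain ⟨a', ha'⟩ := Submodule.mem_span_singleton.mp hmem
    have hpoly : (X 0 : Poly2 k) * (gg : Poly2 k) = (h : Poly2 k) + C a' * (f : Poly2 k) := by
      have h2 : C a' * (f : Poly2 k) = X 0 * (gg : Poly2 k) - (h : Poly2 k) := by
        rw [← MvPolynomial.smul_eq_C_mul]
        have h3 := congrArg Subtype.val ha'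
        simpa [mulX, mulVar] using h3
      linear_combination -h2
    have hdvdx : (X 1 : Poly2 k)^j ∣ (X 0 : Poly2 k) * (gg : Poly2 k) := by
      rw [hpoly]
      exact dvd_add hdvd
        (Dvd.dvd.mul_left (dvd_trans (pow_dvd_pow _ (by omega : j ≤ m+1)) hXdvdf) (C a'))
    have hdvdg : (X 1 : Poly2 k)^j ∣ (gg : Poly2 k) :=
      aux_prime_X1.pow_dvd_of_dvd_mul_left j aux_not_X1_dvd_X0 hdvdx
    refine ⟨mulY k (m+1) gg, ?_, by rw [hAh]; rfl⟩
    show (X 1 : Poly2 k)^(j+1) ∣ X 1 * (gg : Poly2 k)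
    rw [pow_succ']
    exact mul_dvd_mul_left _ hdvdg
  -- anything divisible by y^(m+1) dies in the quotient
  have hkill : ∀ h : Vd k (m+1), (X 1 : Poly2 k)^(m+1) ∣ (h : Poly2 k) →
      Submodule.mkQ (k ∙ f) h = 0 := by
    intro h hdvd
    rw [Submodule.mkQ_apply, Submodule.Quotient.mk_eq_zero]
    obtain ⟨c, hc⟩ := aux_const_form h.2 hdvd
    obtain ⟨cf, hcf⟩ := aux_const_form f.2 hXdvdf
    have hcf0 : cf ≠ 0 := by
      rintro rfl
      simp only [map_zero, zero_mul] at hcf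
      exact hfne hcf
    rw [Submodule.mem_span_singleton]
    refine ⟨c / cf, Subtype.ext ?_⟩
    show (c / cf) • (f : Poly2 k) = (h : Poly2 k)
    rw [MvPolynomial.smul_eq_C_mul, hcf, hc, ← mul_assoc, ← C_mul, div_mul_cancel₀ _ hcf0]
  -- iteration
  have hiter : ∀ j, j ≤ m + 1 → ∀ h : Vd k (m+1),
      ∃ h' : Vd k (m+1), (X 1 : Poly2 k)^j ∣ (h' : Poly2 k) ∧
        (A ^ j) (Submodule.mkQ (k ∙ f) h) = Submodule.mkQ (k ∙ f) h' := by
    intro j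
    induction j with
    | zero => intro _ h; exact ⟨h, one_dvd _, by simp⟩
    | succ j ih =>
        intro hj h
        obtain ⟨h', hd', he'⟩ := ih (by omega) h
        obtain ⟨h'', hd'', he''⟩ := hstep j (by omega) h' hd'
        exact ⟨h'', hd'', by rw [pow_succ', Module.End.mul_apply, he', he'']⟩
  constructor
  · apply LinearMap.ext
    intro z
    obtain ⟨h, rfl⟩ := Submodule.mkQ_surjective (k ∙ f) z
    obtain ⟨h', hd', he'⟩ := hiter (m+1) le_rfl h
    rw [LinearMap.zero_apply, he']
    exact hkill h' hd'
  · intro h0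
    have claim : ∀ j a b, ∀ _hab : a + j + b = m + 1,
        (A ^ j) (Submodule.mkQ (k ∙ f)
            ⟨(X 0 : Poly2 k)^(a+j) * X 1^b, aux_pel_mem (by omega)⟩)
          = Submodule.mkQ (k ∙ f) ⟨(X 0 : Poly2 k)^a * X 1^(b+j), aux_pel_mem (by omega)⟩ := by
      intro j
      induction j with
      | zero => intro a b hab; simp
      | succ j ih =>
          intro a b hab
          have hstep1 : A (Submodule.mkQ (k ∙ f)
              ⟨(X 0 : Poly2 k)^(a+(j+1)) * X 1^b, aux_pel_mem (by omega)⟩)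
              = Submodule.mkQ (k ∙ f)
                ⟨(X 0 : Poly2 k)^(a+j) * X 1^(b+1), aux_pel_mem (by omega)⟩ := by
            have hmemg : (X 0 : Poly2 k)^(a+j) * X 1^b ∈ Vm k (m+1) :=
              aux_pel_mem (by omega : (a+j) + b = m)
            set gg : Vm k (m+1) := ⟨(X 0 : Poly2 k)^(a+j) * X 1^b, hmemg⟩ with hgg
            have h1' : Submodule.mkQ (k ∙ f)
                ⟨(X 0 : Poly2 k)^(a+(j+1)) * X 1^b, aux_pel_mem (by omega)⟩
                = Ru k (m+1) f gg := by
              show _ = Submodule.mkQ (k ∙ f) (mulX k (m+1) gg)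
              congr 1
              apply Subtype.ext
              show (X 0 : Poly2 k)^(a+(j+1)) * X 1^b
                = X 0 * ((X 0 : Poly2 k)^(a+j) * X 1^b)
              ring
            rw [h1', hAu gg]
            show Submodule.mkQ (k ∙ f) (mulY k (m+1) gg) = _
            congr 1
            apply Subtype.ext
            show (X 1 : Poly2 k) * ((X 0 : Poly2 k)^(a+j) * X 1^b)
              = (X 0 : Poly2 k)^(a+j) * X 1^(b+1)
            ring
          rw [pow_succ, Module.End.mul_apply, hstep1, ih a (b+1) (by omega)]
          congr 1
          apply Subtype.ext
          show (X 0 : Poly2 k)^a * X 1^(b+1+j) = (X 0 : Poly2 k)^a * X 1^(b+(j+1))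
          ring_nf
    have hfin := claim m 1 0 (by omega)
    have h0' : A ^ m = 0 := h0
    have hzero : Submodule.mkQ (k ∙ f)
        ⟨(X 0 : Poly2 k)^1 * X 1^m, aux_pel_mem (by omega)⟩ = 0 := by
      have hfin' : Submodule.mkQ (k ∙ f)
          ⟨(X 0 : Poly2 k)^1 * X 1^(0+m), aux_pel_mem (by omega)⟩
          = Submodule.mkQ (k ∙ f)
            ⟨(X 0 : Poly2 k)^1 * X 1^m, aux_pel_mem (by omega)⟩ := by
        congr 1
        apply Subtype.ext
        show (X 0 : Poly2 k)^1 * X 1^(0+m) = (X 0 : Poly2 k)^1 * X 1^m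
        rw [Nat.zero_add]
      rw [← hfin', ← hfin, h0', LinearMap.zero_apply]
    rw [Submodule.mkQ_apply, Submodule.Quotient.mk_eq_zero,
      Submodule.mem_span_singleton] at hzero
    obtain ⟨c, hc⟩ := hzero
    have hcpoly : c • (f : Poly2 k) = (X 0 : Poly2 k)^1 * X 1^m := by
      have := congrArg Subtype.val hc
      simpa using this
    obtain ⟨cf, hcf⟩ := aux_const_form f.2 hXdvdf
    have hμ : (Finsupp.single (1 : Fin 2) (m+1))
        ≠ (Finsupp.single (0 : Fin 2) 1 + Finsupp.single 1 m) := by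
      intro hEq
      have h2 := congrFun (congrArg (DFunLike.coe) hEq) 0
      simp [Finsupp.single_apply] at h2
    have hco := congrArg (coeff (Finsupp.single (0 : Fin 2) 1 + Finsupp.single 1 m)) hcpoly
    rw [MvPolynomial.smul_eq_C_mul, hcf, ← mul_assoc, ← C_mul, X_pow_eq_monomial,
      C_mul_monomial, coeff_monomial, if_neg hμ] at hco
    rw [X_pow_eq_monomial, X_pow_eq_monomial, monomial_mul, coeff_monomial,
      if_pos rfl, one_mul] at hco
    exact one_ne_zero hco.symm
end
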